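/- arXiv:1504.03094 — 8 statements merged into one kernel-verified Lean document; each statement's English description precedes it below -/
import Mathlib

section
/- Let k ≥ 2 and let G be a semigroup (under composition) generated by holomorphic endomorphisms of ℂ^k each of maximal generic rank k. Then for every φ ∈ G, writing Σ_φ = {z ∈ ℂ^k : det Dφ(z) = 0}, one has φ(F(G) \ Σ_φ) ⊆ F(G), where F(G) is the Fatou set of G. -/
open Set Filter Metric Topology

noncomputable section

/-- `ℂ^k`. -/
abbrev Ck (k : ℕ) := Fin k → ℂ

/-- The semigroup (under composition) generated by a set `S` of self-maps. -/
inductive SemigroupGen {α : Type*} (S : Set (α → α)) : (α → α) → Prop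
  | base {f : α → α} : f ∈ S → SemigroupGen S f
  | comp {f g : α → α} : SemigroupGen S f → SemigroupGen S g → SemigroupGen S (f ∘ g)

/-- The semigroup generated by `S`, as a set of maps. -/
def GenSet {α : Type*} (S : Set (α → α)) : Set (α → α) := {f | SemigroupGen S f}

/-- A sequence of maps diverges uniformly to infinity on compact subsets of `U`. -/
def DivergesUniformlyOn {k : ℕ} (f : ℕ → Ck k → Ck k) (U : Set (Ck k)) : Prop :=
  ∀ K ⊆ U, IsCompact K → ∀ R > (0 : ℝ), ∀ᶠ n in atTop, ∀ z ∈ K, R < ‖f n z‖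

/-- The Fatou set of a family `G` of self-maps of `ℂ^k`: points having an open
neighbourhood on which every sequence in `G` admits a subsequence that either converges
uniformly on compact subsets or diverges uniformly to infinity on compact subsets. -/
def FatouSet {k : ℕ} (G : Set (Ck k → Ck k)) : Set (Ck k) :=
  {z | ∃ U : Set (Ck k), IsOpen U ∧ z ∈ U ∧
    ∀ f : ℕ → Ck k → Ck k, (∀ n, f n ∈ G) →
      ∃ s : ℕ → ℕ, StrictMono s ∧
        ((∃ g : Ck k → Ck k, TendstoLocallyUniformlyOn (fun n => f (s n)) g atTop U) ∨
          DivergesUniformlyOn (fun n => f (s n)) U)}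

/-- The Julia set of a family `G`. -/
def JuliaSet {k : ℕ} (G : Set (Ck k → Ck k)) : Set (Ck k) := (FatouSet G)ᶜ

/-- The complex Jacobian determinant of `f` at `z`. -/
def jacDet {k : ℕ} (f : Ck k → Ck k) (z : Ck k) : ℂ :=
  LinearMap.det ((fderiv ℂ f z).toLinearMap)

/-- `Ω` is a connected component of the Fatou set of `G`. -/
def IsFatouComponent {k : ℕ} (G : Set (Ck k → Ck k)) (Ω : Set (Ck k)) : Prop :=
  ∃ z ∈ FatouSet G, Ω = connectedComponentIn (FatouSet G) z

/-- The family `G` is locally uniformly bounded on `Ω`. -/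
def LocUnifBounded {k : ℕ} (G : Set (Ck k → Ck k)) (Ω : Set (Ck k)) : Prop :=
  ∀ z ∈ Ω, ∃ V ⊆ Ω, IsOpen V ∧ z ∈ V ∧ ∃ M > (0 : ℝ), ∀ f ∈ G, ∀ w ∈ V, ‖f w‖ < M

/-- The polynomial hull of a set `K ⊆ ℂ^k`. -/
def polyHull {k : ℕ} (K : Set (Ck k)) : Set (Ck k) :=
  {z | ∀ P : MvPolynomial (Fin k) ℂ,
    ‖MvPolynomial.eval z P‖ ≤ sSup ((fun w => ‖MvPolynomial.eval w P‖) '' K)}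

/-- A Fatou component `Ω` of `G` is recurrent. -/
def Recurrent {k : ℕ} (G : Set (Ck k → Ck k)) (Ω : Set (Ck k)) : Prop :=
  ∀ g : ℕ → Ck k → Ck k, (∀ j, g j ∈ G) →
    ∃ s : ℕ → ℕ, StrictMono s ∧ ∃ p ∈ Ω, ∃ p0 ∈ Ω,
      Tendsto (fun m => g (s m) p) atTop (𝓝 p0)

/-- A holomorphic automorphism of `ℂ^k`. -/
def IsHoloAut {k : ℕ} (f : Ck k → Ck k) : Prop :=
  Differentiable ℂ f ∧ ∃ g : Ck k → Ck k, Differentiable ℂ g ∧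
    Function.LeftInverse g f ∧ Function.RightInverse g f

/-- An upper triangular polynomial automorphism of `ℂ^k`: the `j`-th coordinate is
`a j * z j + h j (z_1, …, z_{j-1})` with `a j ≠ 0` and `h j` a polynomial in the
first `j - 1` variables. -/
def IsUpperTriangularAut {k : ℕ} (T : Ck k → Ck k) : Prop :=
  ∃ (a : Fin k → ℂ) (h : Fin k → MvPolynomial (Fin k) ℂ),
    (∀ j, a j ≠ 0) ∧ (∀ j, ∀ i ∈ (h j).vars, i < j) ∧
    ∀ z j, T z j = a j * z j + MvPolynomial.eval z (h j)


/-- Every element of the generated semigroup of differentiable maps is differentiable. -/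
lemma genset_differentiable {k : ℕ} {S : Set (Ck k → Ck k)}
    (hhol : ∀ f ∈ S, Differentiable ℂ f) {φ : Ck k → Ck k} (hφ : SemigroupGen S φ) :
    Differentiable ℂ φ := by
  induction hφ with
  | base hf => exact hhol _ hf
  | comp hf hg ihf ihg => exact ihf.comp ihg

/-- The Fréchet derivative of an entire map `ℂ^k → ℂ^k` is continuous (via Cauchy estimates). -/
lemma contAt_fderiv {k : ℕ} {φ : Ck k → Ck k} (hd : Differentiable ℂ φ) (z : Ck k) :
    ContinuousAt (fun w => fderiv ℂ φ w) z := by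
  rw [Metric.continuousAt_iff]
  intro ε hε
  have hK : IsCompact (closedBall z 2) := isCompact_closedBall z 2
  have huc : UniformContinuousOn φ (closedBall z 2) :=
    hK.uniformContinuousOn_of_continuous hd.continuous.continuousOn
  rw [Metric.uniformContinuousOn_iff] at huc
  obtain ⟨δ, hδ, hδ'⟩ := huc (ε / 2) (half_pos hε)
  refine ⟨min δ 1, lt_min hδ one_pos, fun {w} hw => ?_⟩
  have hwδ : dist w z < δ := lt_of_lt_of_le hw (min_le_left _ _)
  have hw1 : dist w z < 1 := lt_of_lt_of_le hw (min_le_right _ _)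
  have key : ∀ v : Ck k, ‖(fderiv ℂ φ w - fderiv ℂ φ z) v‖ ≤ (ε / 2) * ‖v‖ := by
    intro v
    rcases eq_or_ne v 0 with rfl | hv
    · simp
    · have hnv : (0 : ℝ) < ‖v‖ := norm_pos_iff.2 hv
      set R : ℝ := ‖v‖⁻¹ with hRdef
      have hR : 0 < R := inv_pos.2 hnv
      set h : ℂ → Ck k := fun t => φ (w + t • v) - φ (z + t • v) with hhdef
      have hdiffh : Differentiable ℂ h := by
        apply Differentiable.sub
        · exact hd.comp ((differentiable_id.smul_const v).const_add w)
        · exact hd.comp ((differentiable_id.smul_const v).const_add z)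
      have h1w : HasDerivAt (fun t : ℂ => w + t • v) v 0 := by
        simpa using ((hasDerivAt_id (0 : ℂ)).smul_const v).const_add w
      have h1z : HasDerivAt (fun t : ℂ => z + t • v) v 0 := by
        simpa using ((hasDerivAt_id (0 : ℂ)).smul_const v).const_add z
      have h2w : HasDerivAt (fun t : ℂ => φ (w + t • v)) (fderiv ℂ φ w v) 0 := by
        have := (hd (w + (0 : ℂ) • v)).hasFDerivAt.comp_hasDerivAt 0 h1w
        simpa [Function.comp_def] using this
      have h2z : HasDerivAt (fun t : ℂ => φ (z + t • v)) (fderiv ℂ φ z v) 0 := by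
        have := (hd (z + (0 : ℂ) • v)).hasFDerivAt.comp_hasDerivAt 0 h1z
        simpa [Function.comp_def] using this
      have hder : HasDerivAt h (fderiv ℂ φ w v - fderiv ℂ φ z v) 0 := h2w.sub h2z
      have hb : ∀ t ∈ sphere (0 : ℂ) R, ‖h t‖ ≤ ε / 2 := by
        intro t ht
        have htn : ‖t‖ = R := by simpa using ht
        have htv : ‖t • v‖ = 1 := by
          rw [norm_smul, htn, hRdef, inv_mul_cancel₀ (ne_of_gt hnv)]
        have hp : w + t • v ∈ closedBall z 2 := by
          rw [mem_closedBall]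
          calc dist (w + t • v) z ≤ dist (w + t • v) w + dist w z := dist_triangle _ _ _
            _ ≤ 1 + 1 := by
                apply add_le_add _ hw1.le
                rw [dist_eq_norm, add_sub_cancel_left, htv]
            _ = 2 := by norm_num
        have hq : z + t • v ∈ closedBall z 2 := by
          rw [mem_closedBall]
          calc dist (z + t • v) z ≤ 1 := by
                rw [dist_eq_norm, add_sub_cancel_left, htv]
            _ ≤ 2 := by norm_num
        have hpq : dist (w + t • v) (z + t • v) < δ := by
          simpa [dist_add_right] using hwδ
        have := hδ' _ hp _ hq hpq
        rw [dist_eq_norm] at this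
        exact this.le
      have hcauchy : ‖deriv h 0‖ ≤ (ε / 2) / R :=
        Complex.norm_deriv_le_of_forall_mem_sphere_norm_le hR hdiffh.diffContOnCl hb
      rw [hder.deriv] at hcauchy
      calc ‖(fderiv ℂ φ w - fderiv ℂ φ z) v‖ = ‖fderiv ℂ φ w v - fderiv ℂ φ z v‖ := by
            rw [ContinuousLinearMap.sub_apply]
        _ ≤ (ε / 2) / R := hcauchy
        _ = (ε / 2) * ‖v‖ := by rw [hRdef, div_eq_mul_inv, inv_inv]
  have hle : dist (fderiv ℂ φ w) (fderiv ℂ φ z) ≤ ε / 2 := by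
    rw [dist_eq_norm]
    exact ContinuousLinearMap.opNorm_le_bound _ (le_of_lt (half_pos hε)) key
  exact lt_of_le_of_lt hle (half_lt_self hε)

/-- If `G` is a semigroup generated by holomorphic endomorphisms of `ℂ^k` of maximal
generic rank `k`, then for every `φ ∈ G`, `φ(F(G) \ Σ_φ) ⊆ F(G)`. -/
theorem stmt_0 {k : ℕ} (hk : 2 ≤ k) (S : Set (Ck k → Ck k))
    (hhol : ∀ f ∈ S, Differentiable ℂ f)
    (hrank : ∀ f ∈ S, ∃ z, jacDet f z ≠ 0)
    (φ : Ck k → Ck k) (hφ : φ ∈ GenSet S) :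
    φ '' (FatouSet (GenSet S) \ {z | jacDet φ z = 0}) ⊆ FatouSet (GenSet S) := by
  rintro _ ⟨z, ⟨hzF, hzSig⟩, rfl⟩
  obtain ⟨U, hUopen, hzU, hU⟩ := hzF
  have hdφ : Differentiable ℂ φ := genset_differentiable hhol hφ
  have hdet : LinearMap.det (fderiv ℂ φ z).toLinearMap ≠ 0 := hzSig
  have hstrict : HasStrictFDerivAt φ (fderiv ℂ φ z) z :=
    hasStrictFDerivAt_of_hasFDerivAt_of_continuousAt
      (Filter.Eventually.of_forall fun y => (hdφ y).hasFDerivAt) (contAt_fderiv hdφ z)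
  set E : Ck k ≃L[ℂ] Ck k :=
    ((fderiv ℂ φ z).toLinearMap.equivOfDetNeZero hdet).toContinuousLinearEquiv with hEdef
  have hE : (E : Ck k →L[ℂ] Ck k) = fderiv ℂ φ z := by
    ext v
    rfl
  have hstrict' : HasStrictFDerivAt φ (E : Ck k →L[ℂ] Ck k) z := hE ▸ hstrict
  set ph := HasStrictFDerivAt.toOpenPartialHomeomorph φ hstrict' with hphdef
  have hcoe : ∀ x, ph x = φ x := fun x => rfl
  set W : Set (Ck k) := ph.source ∩ U with hWdef
  have hWsub : W ⊆ ph.source := inter_subset_left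
  have hWU : W ⊆ U := inter_subset_right
  have hWopen : IsOpen W := ph.open_source.inter hUopen
  have hzW : z ∈ W := ⟨hstrict'.mem_toOpenPartialHomeomorph_source, hzU⟩
  set V : Set (Ck k) := ph '' W with hVdef
  have hVopen : IsOpen V := ph.isOpen_image_of_subset_source hWopen hWsub
  have hφzV : φ z ∈ V := ⟨z, hzW, rfl⟩
  have hψ : ∀ v ∈ V, ph.symm v ∈ W ∧ φ (ph.symm v) = v := by
    rintro _ ⟨x, hx, rfl⟩
    have hinv : ph.symm (ph x) = x := ph.left_inv (hWsub hx)
    exact ⟨by rw [hinv]; exact hx, by rw [hinv]; exact (hcoe x).symm⟩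
  have hVsubT : V ⊆ ph.target := by
    rintro _ ⟨x, hx, rfl⟩
    exact ph.map_source (hWsub hx)
  have hψcont : ContinuousOn ph.symm V := ph.continuousOn_symm.mono hVsubT
  have hψmaps : MapsTo ph.symm V U := fun v hv => hWU (hψ v hv).1
  refine ⟨V, hVopen, hφzV, ?_⟩
  intro f hf
  obtain ⟨s, hsm, hcase⟩ := hU (fun n => f n ∘ φ) (fun n => SemigroupGen.comp (hf n) hφ)
  refine ⟨s, hsm, ?_⟩
  rcases hcase with ⟨g, hg⟩ | hdiv
  · left
    refine ⟨g ∘ ph.symm, ?_⟩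
    have hcomp := hg.comp ph.symm hψmaps hψcont
    exact hcomp.congr fun n v hv => by
      simp only [Function.comp_apply]
      rw [(hψ v hv).2]
  · right
    intro K hKV hKc R hR
    have hK' : IsCompact (ph.symm '' K) := hKc.image_of_continuousOn (hψcont.mono hKV)
    have hK'U : ph.symm '' K ⊆ U := by
      rintro _ ⟨v, hv, rfl⟩
      exact hψmaps (hKV hv)
    filter_upwards [hdiv (ph.symm '' K) hK'U hK' R hR] with n hn v hv
    have h2 := hn (ph.symm v) ⟨v, hv, rfl⟩
    simpa [Function.comp, (hψ v (hKV hv)).2] using h2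
end
end

section
/- Let k ≥ 2 and let φ_1, …, φ_m be proper holomorphic endomorphisms of ℂ^k that pairwise commute (φ_i ∘ φ_j = φ_j ∘ φ_i for all i, j). For an m-tuple l = (l_1, …, l_m) of positive integers let G_l = ⟨φ_1^{l_1}, …, φ_m^{l_m}⟩ be the semigroup generated by the indicated iterates. Then for any two m-tuples p and q of positive integers, F(G_p) = F(G_q) and J(G_p) = J(G_q). -/
open Set Filter Metric Topology

noncomputable section

namespace S6aux

variable {k m : ℕ}

/-- Composition of the iterates `(ψ i)^[a i]` along a list of indices. -/
def Wl (ψ : Fin m → Ck k → Ck k) (a : Fin m → ℕ) : List (Fin m) → (Ck k → Ck k)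
  | [] => id
  | i :: L => (ψ i)^[a i] ∘ Wl ψ a L

/-- The "normal form" word `∏ i, (ψ i)^[a i]`. -/
def W (ψ : Fin m → Ck k → Ck k) (a : Fin m → ℕ) : Ck k → Ck k :=
  Wl ψ a (List.finRange m)

variable {ψ : Fin m → Ck k → Ck k}

lemma iter_comm (hc : ∀ i j, ψ i ∘ ψ j = ψ j ∘ ψ i) (i j : Fin m) (a b : ℕ) :
    Function.Commute (ψ i)^[a] (ψ j)^[b] := by
  have h : Function.Commute (ψ i) (ψ j) := fun x => congrFun (hc i j) x
  exact (h.iterate_left a).iterate_right b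

lemma comm_Wl (hc : ∀ i j, ψ i ∘ ψ j = ψ j ∘ ψ i) (i : Fin m) (n : ℕ) (a : Fin m → ℕ) :
    ∀ L, (ψ i)^[n] ∘ Wl ψ a L = Wl ψ a L ∘ (ψ i)^[n] := by
  intro L
  induction L with
  | nil => rfl
  | cons j L ih =>
    funext x
    calc (ψ i)^[n] ((ψ j)^[a j] (Wl ψ a L x))
        = (ψ j)^[a j] ((ψ i)^[n] (Wl ψ a L x)) := iter_comm hc i j n (a j) _
      _ = (ψ j)^[a j] (Wl ψ a L ((ψ i)^[n] x)) := by
          have hx := congrFun ih x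
          simp only [Function.comp_apply] at hx
          rw [hx]

lemma Wl_add (hc : ∀ i j, ψ i ∘ ψ j = ψ j ∘ ψ i) (a b : Fin m → ℕ) :
    ∀ L, Wl ψ (a + b) L = Wl ψ a L ∘ Wl ψ b L := by
  intro L
  induction L with
  | nil => rfl
  | cons j L ih =>
    funext x
    show (ψ j)^[(a + b) j] (Wl ψ (a + b) L x)
        = (ψ j)^[a j] (Wl ψ a L ((ψ j)^[b j] (Wl ψ b L x)))
    have hx := congrFun ih x
    have hcw := congrFun (comm_Wl hc j (b j) a L) (Wl ψ b L x)
    simp only [Function.comp_apply] at hx hcw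
    rw [Pi.add_apply, Function.iterate_add_apply, hx, hcw]

lemma Wl_zero (a : Fin m → ℕ) : ∀ L, (∀ i ∈ L, a i = 0) → Wl ψ a L = id := by
  intro L
  induction L with
  | nil => intro; rfl
  | cons j L ih =>
    intro h
    show (ψ j)^[a j] ∘ Wl ψ a L = id
    rw [h j List.mem_cons_self, ih (fun i hi => h i (List.mem_cons_of_mem j hi))]
    rfl

lemma Wl_mul (t b : Fin m → ℕ) :
    ∀ L, Wl ψ (fun i => t i * b i) L = Wl (fun i => (ψ i)^[t i]) b L := by
  intro L
  induction L with
  | nil => rfl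
  | cons j L ih =>
    show (ψ j)^[t j * b j] ∘ _ = ((ψ j)^[t j])^[b j] ∘ _
    rw [Function.iterate_mul, ih]

lemma Wl_single (i : Fin m) (n : ℕ) :
    ∀ L, List.Nodup L → i ∈ L → Wl ψ (Pi.single i n) L = (ψ i)^[n] := by
  intro L
  induction L with
  | nil => intro _ h; exact absurd h List.not_mem_nil
  | cons j L ih =>
    intro hnd hmem
    obtain ⟨hjL, hndL⟩ := List.nodup_cons.mp hnd
    rcases List.mem_cons.mp hmem with h | h
    · subst h
      show (ψ i)^[(Pi.single i n : Fin m → ℕ) i] ∘ Wl ψ (Pi.single i n) L = (ψ i)^[n]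
      rw [Pi.single_eq_same,
        Wl_zero _ L (fun j' hj' => by
          have hne : j' ≠ i := by rintro rfl; exact hjL hj'
          simp [Pi.single_eq_of_ne hne])]
      rfl
    · have hji : j ≠ i := by rintro rfl; exact hjL h
      show (ψ j)^[(Pi.single i n : Fin m → ℕ) j] ∘ Wl ψ (Pi.single i n) L = (ψ i)^[n]
      rw [Pi.single_eq_of_ne hji, ih hndL h]
      rfl

lemma W_mem (hc : ∀ i j, ψ i ∘ ψ j = ψ j ∘ ψ i) :
    ∀ N (a : Fin m → ℕ), ∑ i, a i = N → N ≠ 0 → W ψ a ∈ GenSet (Set.range ψ) := by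
  intro N
  induction N using Nat.strong_induction_on with
  | _ N ihN =>
    intro a hsum hN
    obtain ⟨i, -, hi⟩ := Finset.exists_ne_zero_of_sum_ne_zero (f := a) (by rw [hsum]; exact hN)
    set a' := Function.update a i (a i - 1) with ha'
    have hdecomp : a = Pi.single i 1 + a' := by
      funext j
      by_cases hj : j = i
      · subst hj
        simp only [Pi.add_apply, Pi.single_eq_same, ha', Function.update_self]
        omega
      · simp only [Pi.add_apply, Pi.single_eq_of_ne hj, ha', Function.update_of_ne hj, zero_add]
    have hW : W ψ a = ψ i ∘ W ψ a' := by
      rw [hdecomp]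
      show Wl ψ _ _ = _
      rw [Wl_add hc, Wl_single i 1 _ (List.nodup_finRange m) (List.mem_finRange i),
        Function.iterate_one]
      rfl
    have hsum' : ∑ j, a' j = N - 1 := by
      have h1 : ∑ j, a' j = (a i - 1) + ∑ j ∈ Finset.univ.erase i, a j := by
        rw [ha', Finset.sum_update_of_mem (Finset.mem_univ i), Finset.sdiff_singleton_eq_erase]
      have h2 : a i + ∑ j ∈ Finset.univ.erase i, a j = N := by
        rw [Finset.add_sum_erase _ a (Finset.mem_univ i), hsum]
      omega
    rw [hW]
    rcases Nat.eq_zero_or_pos (N - 1) with h | h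
    · have : W ψ a' = id := Wl_zero a' _ (fun j _ => by
        have := Finset.sum_eq_zero_iff.mp (hsum'.trans h)
        exact this j (Finset.mem_univ j))
      rw [this]
      exact SemigroupGen.base ⟨i, rfl⟩
    · exact SemigroupGen.comp (SemigroupGen.base ⟨i, rfl⟩) (ihN (N - 1) (by omega) a' hsum' (by omega))

lemma gen_normal (hc : ∀ i j, ψ i ∘ ψ j = ψ j ∘ ψ i) {f : Ck k → Ck k}
    (hf : f ∈ GenSet (Set.range ψ)) : ∃ a : Fin m → ℕ, ∑ i, a i ≠ 0 ∧ f = W ψ a := by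
  induction hf with
  | base h =>
    obtain ⟨i, rfl⟩ := h
    refine ⟨Pi.single i 1, by simp, ?_⟩
    rw [W, Wl_single i 1 _ (List.nodup_finRange m) (List.mem_finRange i), Function.iterate_one]
  | comp h1 h2 ih1 ih2 =>
    obtain ⟨a, ha, rfl⟩ := ih1
    obtain ⟨b, hb, rfl⟩ := ih2
    refine ⟨a + b, ?_, (Wl_add hc a b _).symm⟩
    simp only [Pi.add_apply, Finset.sum_add_distrib]
    omega

lemma Wl_continuous (hcont : ∀ i, Continuous (ψ i)) (a : Fin m → ℕ) :
    ∀ L, Continuous (Wl ψ a L) := by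
  intro L
  induction L with
  | nil => exact continuous_id
  | cons j L ih => exact ((hcont j).iterate (a j)).comp ih

lemma iterate_proper {f : Ck k → Ck k} (hf : IsProperMap f) : ∀ n, IsProperMap f^[n] := by
  intro n
  induction n with
  | zero => exact isProperMap_id
  | succ n ih => rw [Function.iterate_succ]; exact ih.comp hf

lemma Wl_proper (hp : ∀ i, IsProperMap (ψ i)) (a : Fin m → ℕ) :
    ∀ L, IsProperMap (Wl ψ a L) := by
  intro L
  induction L with
  | nil => exact isProperMap_id
  | cons j L ih => exact (iterate_proper (hp j) (a j)).comp ih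

/-- Post-composition with a continuous map preserves locally uniform convergence
(using local compactness of the target). -/
lemma tlu_comp {U : Set (Ck k)} {F : ℕ → Ck k → Ck k} {h : Ck k → Ck k}
    (r : Ck k → Ck k) (hr : Continuous r)
    (hF : TendstoLocallyUniformlyOn F h atTop U) (hh : ContinuousOn h U) :
    TendstoLocallyUniformlyOn (fun n => r ∘ F n) (r ∘ h) atTop U := by
  rw [Metric.tendstoLocallyUniformlyOn_iff] at hF ⊢
  intro ε hε x hx
  have hcomp : IsCompact (closedBall (h x) 1) := isCompact_closedBall _ _
  have huc := hcomp.uniformContinuousOn_of_continuous hr.continuousOn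
  rw [Metric.uniformContinuousOn_iff] at huc
  obtain ⟨δ, hδ, hδ'⟩ := huc ε hε
  obtain ⟨t₀, ht₀, ht₀'⟩ := hF (min δ (1/2)) (by positivity) x hx
  have ht₁ : {y | dist (h y) (h x) < 1/2} ∈ 𝓝[U] x := by
    have := (hh x hx).tendsto (Metric.ball_mem_nhds (h x) (by norm_num : (0:ℝ) < 1/2))
    simpa [Metric.ball, dist_comm] using this
  refine ⟨t₀ ∩ {y | dist (h y) (h x) < 1/2}, Filter.inter_mem ht₀ ht₁, ?_⟩
  filter_upwards [ht₀'] with n hn y hy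
  have h1 : dist (h y) (F n y) < min δ (1/2) := hn y hy.1
  obtain ⟨h1a, h1b⟩ := lt_min_iff.mp h1
  have h2 : dist (h y) (h x) < 1/2 := hy.2
  have hhy : h y ∈ closedBall (h x) 1 := by
    rw [Metric.mem_closedBall]
    linarith
  have hFy : F n y ∈ closedBall (h x) 1 := by
    rw [Metric.mem_closedBall]
    have htri := dist_triangle (F n y) (h y) (h x)
    have hcm : dist (F n y) (h y) = dist (h y) (F n y) := dist_comm _ _
    linarith
  exact hδ' _ hhy _ hFy h1a

/-- Post-composition with a proper map preserves uniform divergence to infinity. -/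
lemma div_comp {U : Set (Ck k)} {g : ℕ → Ck k → Ck k} (r : Ck k → Ck k)
    (hrp : IsProperMap r) (hd : DivergesUniformlyOn g U) :
    DivergesUniformlyOn (fun n => r ∘ g n) U := by
  intro K hK hKc R hR
  obtain ⟨S, hS⟩ := (hrp.isCompact_preimage (isCompact_closedBall (0 : Ck k) R)).isBounded.subset_closedBall 0
  filter_upwards [hd K hK hKc (max S 0 + 1) (by positivity)] with n hn z hz
  by_contra hle
  push_neg at hle
  have hmem : g n z ∈ r ⁻¹' closedBall 0 R := by
    rw [Set.mem_preimage, mem_closedBall_zero_iff]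
    exact hle
  have := hS hmem
  rw [mem_closedBall_zero_iff] at this
  have := hn z hz
  have : max S 0 + 1 < ‖g n z‖ := this
  have hSle : S ≤ max S 0 := le_max_left _ _
  linarith

lemma fatou_hard (hc : ∀ i j, ψ i ∘ ψ j = ψ j ∘ ψ i) (hcont : ∀ i, Continuous (ψ i))
    (hp : ∀ i, IsProperMap (ψ i)) (t : Fin m → ℕ) (ht : ∀ i, 0 < t i) :
    FatouSet (GenSet (Set.range fun i => (ψ i)^[t i])) ⊆ FatouSet (GenSet (Set.range ψ)) := by
  intro z hz
  obtain ⟨U, hUo, hzU, hU⟩ := hz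
  refine ⟨U, hUo, hzU, ?_⟩
  intro f hf
  choose a ha hfa using fun n => gen_normal hc (hf n)
  set χ : Fin m → Ck k → Ck k := fun i => (ψ i)^[t i] with hχ
  have hcχ : ∀ i j, χ i ∘ χ j = χ j ∘ χ i := fun i j =>
    funext fun x => iter_comm hc i j (t i) (t j) x
  set b : ℕ → Fin m → ℕ := fun n i => a n i / t i with hb
  set C : ℕ → ((∀ i, Fin (t i)) × Bool) := fun n =>
    (fun i => ⟨a n i % t i, Nat.mod_lt _ (ht i)⟩, decide (b n = 0)) with hCdef
  obtain ⟨v, hv⟩ := Finite.exists_infinite_fiber C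
  rw [Set.infinite_coe_iff] at hv
  have hv' : {n | C n = v}.Infinite := hv
  set s : ℕ → ℕ := Nat.nth (fun n => C n = v) with hsdef
  have hs : StrictMono s := Nat.nth_strictMono hv'
  have hmem : ∀ n, C (s n) = v := fun n => Nat.nth_mem_of_infinite hv' n
  set cnat : Fin m → ℕ := fun i => (v.1 i : ℕ) with hcnat
  have hdec : ∀ n, C n = v → f n = W ψ cnat ∘ W χ (b n) := by
    intro n hn
    have h1 : a n = cnat + (fun i => t i * b n i) := by
      funext i
      have hmod : a n i % t i = cnat i := by
        rw [hcnat, ← hn]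
      have hdm := Nat.div_add_mod (a n i) (t i)
      simp only [Pi.add_apply, hb]
      omega
    rw [hfa n, h1]
    show Wl ψ _ _ = _
    rw [Wl_add hc, Wl_mul]
    rfl
  by_cases hflag : v.2 = true
  · -- along the fiber the `G_t`-part is trivial: `f (s n)` is constantly `W ψ cnat`
    refine ⟨s, hs, Or.inl ⟨W ψ cnat, ?_⟩⟩
    have hb0 : ∀ n, b (s n) = 0 := by
      intro n
      have h := hmem n
      have : decide (b (s n) = 0) = v.2 := congrArg Prod.snd h
      rw [hflag] at this
      exact of_decide_eq_true this
    have hconst : ∀ n, f (s n) = W ψ cnat := by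
      intro n
      rw [hdec (s n) (hmem n), hb0 n]
      have hz0 : W χ (0 : Fin m → ℕ) = id := Wl_zero _ _ (fun i _ => rfl)
      rw [hz0, Function.comp_id]
    intro u hu x hx
    refine ⟨U, self_mem_nhdsWithin, Filter.Eventually.of_forall fun n y _ => ?_⟩
    show (W ψ cnat y, f (s n) y) ∈ u
    rw [hconst n]
    exact refl_mem_uniformity hu
  · -- the `G_t`-parts form a sequence in `G_t`; apply the Fatou property at `z`
    have hbne : ∀ n, ∑ i, b (s n) i ≠ 0 := by
      intro n hsum0
      apply hflag
      have h := hmem n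
      have h2 : decide (b (s n) = 0) = v.2 := congrArg Prod.snd h
      rw [← h2]
      have : b (s n) = 0 := funext fun i =>
        Finset.sum_eq_zero_iff.mp hsum0 i (Finset.mem_univ i)
      simp [this]
    obtain ⟨s', hs', hcase⟩ := hU (fun n => W χ (b (s n)))
      (fun n => W_mem hcχ _ (b (s n)) rfl (hbne n))
    refine ⟨s ∘ s', hs.comp hs', ?_⟩
    have heq : (fun n => f ((s ∘ s') n)) = fun n => (W ψ cnat ∘ W χ (b (s (s' n)))) :=
      funext fun n => hdec _ (hmem _)
    rcases hcase with ⟨g, hg⟩ | hdiv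
    · left
      refine ⟨W ψ cnat ∘ g, ?_⟩
      rw [heq]
      have hgc : ContinuousOn g U :=
        hg.continuousOn (Filter.Eventually.frequently <| Filter.Eventually.of_forall fun n =>
          (Wl_continuous (fun i => (hcont i).iterate (t i)) _ _).continuousOn)
      exact tlu_comp (W ψ cnat) (Wl_continuous hcont _ _) hg hgc
    · right
      rw [heq]
      exact div_comp (W ψ cnat) (Wl_proper hp _ _) hdiv

lemma gen_mono {α : Type*} {S S' : Set (α → α)} (h : S' ⊆ GenSet S) :
    GenSet S' ⊆ GenSet S := by
  intro f hf
  induction hf with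
  | base hb => exact h hb
  | comp _ _ ih1 ih2 => exact SemigroupGen.comp ih1 ih2

lemma iterate_mem {α : Type*} {S : Set (α → α)} {f : α → α} (hf : f ∈ S) :
    ∀ n, 0 < n → f^[n] ∈ GenSet S := by
  intro n hn
  induction n with
  | zero => omega
  | succ n ih =>
    rcases Nat.eq_zero_or_pos n with h | h
    · subst h
      exact SemigroupGen.base hf
    · rw [Function.iterate_succ]
      exact SemigroupGen.comp (ih h) (SemigroupGen.base hf)

lemma fatou_anti {G G' : Set (Ck k → Ck k)} (h : G' ⊆ G) : FatouSet G ⊆ FatouSet G' := by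
  rintro z ⟨U, h1, h2, h3⟩
  exact ⟨U, h1, h2, fun f hf => h3 f (fun n => h (hf n))⟩

end S6aux

/-- For pairwise commuting proper holomorphic endomorphisms `φ_1, …, φ_m` of `ℂ^k`,
the Fatou and Julia sets of the semigroup `G_l = ⟨φ_1^{l_1}, …, φ_m^{l_m}⟩` do not
depend on the tuple `l` of positive integers. -/
theorem stmt_6 {k m : ℕ} (hk : 2 ≤ k) (φ : Fin m → Ck k → Ck k)
    (hhol : ∀ i, Differentiable ℂ (φ i))
    (hprop : ∀ i, IsProperMap (φ i))
    (hcomm : ∀ i j, φ i ∘ φ j = φ j ∘ φ i)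
    (p q : Fin m → ℕ) (hp : ∀ i, 0 < p i) (hq : ∀ i, 0 < q i) :
    FatouSet (GenSet (Set.range fun i => (φ i)^[p i])) =
      FatouSet (GenSet (Set.range fun i => (φ i)^[q i])) ∧
    JuliaSet (GenSet (Set.range fun i => (φ i)^[p i])) =
      JuliaSet (GenSet (Set.range fun i => (φ i)^[q i])) := by
  have key : ∀ l : Fin m → ℕ, (∀ i, 0 < l i) →
      FatouSet (GenSet (Set.range fun i => (φ i)^[l i])) = FatouSet (GenSet (Set.range φ)) := by
    intro l hl
    apply Set.Subset.antisymm
    · exact S6aux.fatou_hard hcomm (fun i => (hhol i).continuous) hprop l hl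
    · apply S6aux.fatou_anti
      apply S6aux.gen_mono
      rintro _ ⟨i, rfl⟩
      exact S6aux.iterate_mem (Set.mem_range_self i) (l i) (hl i)
  have h1 := key p hp
  have h2 := key q hq
  have hF : FatouSet (GenSet (Set.range fun i => (φ i)^[p i])) =
      FatouSet (GenSet (Set.range fun i => (φ i)^[q i])) := h1.trans h2.symm
  exact ⟨hF, by unfold JuliaSet; rw [hF]⟩
end
end

section
/- Let a ∈ ℂ with |a| > 1, let f(z_1, z_2) = (z_1^2, z_2^2) and g(z_1, z_2) = (z_1^2/a, z_2^2), and let G = ⟨f, g⟩ be the semigroup they generate. Then the Julia set of G is J(G) = ({z_1 : |z_1| ≤ 1} × {z_2 : |z_2| = 1}) ∪ ({z_1 : 1 ≤ |z_1| ≤ |a|} × {z_2 : |z_2| ≤ 1}). In particular J(G) is not forward invariant under G. -/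
open Set Filter Metric Topology

noncomputable section

namespace Stmt7


def Hm (a : ℂ) (n c : ℕ) : Ck 2 → Ck 2 :=
  fun z => ![z 0 ^ (2^n) / a ^ c, z 1 ^ (2^n)]

def Sg (a : ℂ) : Set (Ck 2 → Ck 2) :=
  {(fun z : Ck 2 => ![z 0 ^ 2, z 1 ^ 2]), (fun z : Ck 2 => ![z 0 ^ 2 / a, z 1 ^ 2])}

lemma Hm_comp {a : ℂ} (ha : a ≠ 0) (n c m d : ℕ) :
    Hm a n c ∘ Hm a m d = Hm a (n + m) (c + 2 ^ n * d) := by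
  have epow : 2 ^ m * 2 ^ n = 2 ^ (n + m) := by rw [pow_add]; ring
  funext z
  have e0 : (z 0 ^ 2 ^ m / a ^ d) ^ 2 ^ n / a ^ c
      = z 0 ^ 2 ^ (n + m) / a ^ (c + 2 ^ n * d) := by
    rw [div_pow, ← pow_mul, ← pow_mul, div_div, ← pow_add, ← pow_add]
    congr 2 <;> ring
  have e1 : (z 1 ^ 2 ^ m) ^ 2 ^ n = z 1 ^ 2 ^ (n + m) := by rw [← pow_mul, epow]
  simp only [Hm, Function.comp_apply, Matrix.cons_val_zero, Matrix.cons_val_one,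
    Matrix.head_cons, Fin.isValue]
  rw [e0, e1]

lemma Hm_one_zero {a : ℂ} : Hm a 1 0 = (fun z : Ck 2 => ![z 0 ^ 2, z 1 ^ 2]) := by
  funext z; simp [Hm]

lemma Hm_one_one {a : ℂ} : Hm a 1 1 = (fun z : Ck 2 => ![z 0 ^ 2 / a, z 1 ^ 2]) := by
  funext z; simp [Hm]

lemma Hm_mem {a : ℂ} (ha : a ≠ 0) : ∀ n, 1 ≤ n → ∀ c, c < 2 ^ n →
    Hm a n c ∈ GenSet (Sg a) := by
  intro n
  induction n with
  | zero => omega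
  | succ n ih =>
    intro _ c hc
    rcases Nat.eq_zero_or_pos n with rfl | hn
    · interval_cases c
      · exact SemigroupGen.base (by rw [Hm_one_zero]; left; rfl)
      · exact SemigroupGen.base (by rw [Hm_one_one]; right; rfl)
    · by_cases h : c < 2 ^ n
      · have e : c + 2 ^ n * 0 = c := by omega
        have : Hm a n c ∘ Hm a 1 0 = Hm a (n + 1) c := by rw [Hm_comp ha, e]
        rw [← this]
        exact SemigroupGen.comp (ih hn c h)
          (SemigroupGen.base (by rw [Hm_one_zero]; left; rfl))
      · have hc' : c - 2 ^ n < 2 ^ n := by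
          have : (2:ℕ) ^ (n+1) = 2^n + 2^n := by ring
          omega
        have e : c - 2 ^ n + 2 ^ n * 1 = c := by omega
        have : Hm a n (c - 2 ^ n) ∘ Hm a 1 1 = Hm a (n + 1) c := by rw [Hm_comp ha, e]
        rw [← this]
        exact SemigroupGen.comp (ih hn _ hc')
          (SemigroupGen.base (by rw [Hm_one_one]; right; rfl))

lemma Hm_struct {a : ℂ} (ha : a ≠ 0) {φ : Ck 2 → Ck 2} (hφ : SemigroupGen (Sg a) φ) :
    ∃ n c, 1 ≤ n ∧ c < 2 ^ n ∧ φ = Hm a n c := by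
  induction hφ with
  | base h =>
    rcases h with h | h
    · exact ⟨1, 0, le_refl _, by norm_num, by rw [h, Hm_one_zero]⟩
    · exact ⟨1, 1, le_refl _, by norm_num, by rw [h, Hm_one_one]⟩
  | comp h1 h2 ih1 ih2 =>
    obtain ⟨n, c, hn, hc, rfl⟩ := ih1
    obtain ⟨m, d, hm, hd, rfl⟩ := ih2
    refine ⟨n + m, c + 2 ^ n * d, by omega, ?_, (Hm_comp ha n c m d)⟩
    calc c + 2 ^ n * d < 2 ^ n + 2 ^ n * d := by omega
      _ ≤ 2 ^ n * (d + 1) := by ring_nf; omega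
      _ ≤ 2 ^ n * 2 ^ m := by
          exact Nat.mul_le_mul_left _ (by omega)
      _ = 2 ^ (n + m) := (pow_add 2 n m).symm

lemma norm_pair (u v : ℂ) : ‖(![u, v] : Ck 2)‖ = max ‖u‖ ‖v‖ := by
  apply le_antisymm
  · rw [pi_norm_le_iff_of_nonneg (le_max_of_le_left (norm_nonneg u))]
    intro i; fin_cases i <;> simp [le_max_left, le_max_right]
  · apply max_le
    · exact le_trans (le_of_eq rfl) (norm_le_pi_norm ![u,v] 0)
    · exact le_trans (le_of_eq rfl) (norm_le_pi_norm ![u,v] 1)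

lemma norm_Hm (a : ℂ) (n c : ℕ) (z : Ck 2) :
    ‖Hm a n c z‖ = max (‖z 0‖ ^ 2 ^ n / ‖a‖ ^ c) (‖z 1‖ ^ 2 ^ n) := by
  have : Hm a n c z = ![z 0 ^ 2 ^ n / a ^ c, z 1 ^ 2 ^ n] := rfl
  rw [this, norm_pair, norm_div, norm_pow, norm_pow, norm_pow]



lemma tluo_const {φ : Ck 2 → Ck 2} {U : Set (Ck 2)} :
    TendstoLocallyUniformlyOn (fun _ : ℕ => φ) φ atTop U := by
  intro u hu x _
  exact ⟨U, self_mem_nhdsWithin, Eventually.of_forall fun n y _ => refl_mem_uniformity hu⟩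

lemma dichotomy {a : ℂ} (ha : a ≠ 0) (f : ℕ → Ck 2 → Ck 2)
    (hf : ∀ n, f n ∈ GenSet (Sg a)) :
    (∃ s : ℕ → ℕ, StrictMono s ∧ ∃ n c : ℕ, 1 ≤ n ∧ c < 2 ^ n ∧ ∀ j, f (s j) = Hm a n c) ∨
    (∃ k c : ℕ → ℕ, (∀ n, 1 ≤ k n ∧ c n < 2 ^ k n ∧ f n = Hm a (k n) (c n)) ∧
      Tendsto k atTop atTop) := by
  have h : ∀ n, ∃ p : ℕ × ℕ, 1 ≤ p.1 ∧ p.2 < 2 ^ p.1 ∧ f n = Hm a p.1 p.2 := by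
    intro n
    obtain ⟨k, c, h1, h2, h3⟩ := Hm_struct ha (hf n)
    exact ⟨(k, c), h1, h2, h3⟩
  choose p hp1 hp2 hp3 using h
  by_cases hinf : ∃ q : ℕ × ℕ, {n | p n = q}.Infinite
  · obtain ⟨q, hq⟩ := hinf
    obtain ⟨n0, hn0⟩ := hq.nonempty
    left
    refine ⟨Nat.nth (fun n => p n = q), Nat.nth_strictMono hq, q.1, q.2, ?_, ?_, ?_⟩
    · rw [← hn0]; exact hp1 n0
    · rw [← hn0]; exact hp2 n0
    · intro j
      have := Nat.nth_mem_of_infinite hq j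
      rw [hp3, this]
  · right
    push_neg at hinf
    refine ⟨fun n => (p n).1, fun n => (p n).2, fun n => ⟨hp1 n, hp2 n, hp3 n⟩, ?_⟩
    refine Filter.tendsto_atTop.2 fun b => ?_
    rw [← Nat.cofinite_eq_atTop, eventually_cofinite]
    have hsub : {n | ¬ b ≤ (p n).1} ⊆
        ⋃ q ∈ (Set.Iio b ×ˢ Set.Iio (2 ^ b) : Set (ℕ × ℕ)), {n | p n = q} := by
      intro n hn
      simp only [Set.mem_setOf_eq, not_le] at hn
      refine Set.mem_biUnion ?_ rfl
      exact ⟨hn, lt_of_lt_of_le (hp2 n) (Nat.pow_le_pow_right (by norm_num) hn.le)⟩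
    exact Set.Finite.subset
      (Set.Finite.biUnion ((Set.finite_Iio b).prod (Set.finite_Iio (2 ^ b)))
        (fun q _ => hinf q)) hsub

lemma tendsto_aux0 {r : ℝ} (h0 : 0 ≤ r) (h1 : r < 1) {k : ℕ → ℕ} (hk : Tendsto k atTop atTop) :
    Tendsto (fun n => r ^ 2 ^ k n) atTop (𝓝 0) :=
  (tendsto_pow_atTop_nhds_zero_of_lt_one h0 h1).comp
    ((tendsto_pow_atTop_atTop_of_one_lt (one_lt_two : (1:ℕ) < 2)).comp hk)

lemma tendsto_auxT {r : ℝ} (h1 : 1 < r) {k : ℕ → ℕ} (hk : Tendsto k atTop atTop) :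
    Tendsto (fun n => r ^ 2 ^ k n) atTop atTop :=
  (tendsto_pow_atTop_atTop_of_one_lt h1).comp
    ((tendsto_pow_atTop_atTop_of_one_lt (one_lt_two : (1:ℕ) < 2)).comp hk)

lemma fatou_A {a : ℂ} (ha : 1 < ‖a‖) {z : Ck 2} (hz : 1 < ‖z 1‖) :
    z ∈ FatouSet (GenSet (Sg a)) := by
  have ha0 : a ≠ 0 := by
    intro h; rw [h, norm_zero] at ha; linarith
  set r : ℝ := (1 + ‖z 1‖) / 2 with hr
  have hr1 : 1 < r := by rw [hr]; linarith
  have hrz : r < ‖z 1‖ := by rw [hr]; linarith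
  refine ⟨{w | r < ‖w 1‖}, isOpen_lt continuous_const ((continuous_apply (1 : Fin 2)).norm),
    hrz, ?_⟩
  intro f hf
  rcases dichotomy ha0 f hf with ⟨s, hs, n, c, _, _, hcon⟩ | ⟨k, c, hk, hktop⟩
  · refine ⟨s, hs, Or.inl ⟨Hm a n c, ?_⟩⟩
    have : (fun j => f (s j)) = fun _ => Hm a n c := funext hcon
    rw [this]; exact tluo_const
  · refine ⟨id, strictMono_id, Or.inr ?_⟩
    intro K hK _ R _
    filter_upwards [(tendsto_auxT hr1 hktop).eventually_gt_atTop R] with n hn2 w hw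
    have hw1 : r < ‖w 1‖ := hK hw
    have h1 : r ^ 2 ^ k n ≤ ‖w 1‖ ^ 2 ^ k n := pow_le_pow_left₀ (by linarith) hw1.le _
    have hge : ‖w 1‖ ^ 2 ^ k n ≤ ‖f n w‖ := by
      rw [(hk n).2.2, norm_Hm]; exact le_max_right _ _
    calc R < r ^ 2 ^ k n := hn2
      _ ≤ _ := le_trans h1 hge

lemma fatou_B {a : ℂ} (ha : 1 < ‖a‖) {z : Ck 2} (hz : ‖a‖ < ‖z 0‖) :
    z ∈ FatouSet (GenSet (Sg a)) := by
  have ha0 : a ≠ 0 := by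
    intro h; rw [h, norm_zero] at ha; linarith
  have hapos : (0:ℝ) < ‖a‖ := by linarith
  set r : ℝ := (‖a‖ + ‖z 0‖) / 2 with hr
  have hra : ‖a‖ < r := by rw [hr]; linarith
  have hrz : r < ‖z 0‖ := by rw [hr]; linarith
  have hρ : 1 < r / ‖a‖ := (one_lt_div hapos).2 hra
  refine ⟨{w | r < ‖w 0‖}, isOpen_lt continuous_const ((continuous_apply (0 : Fin 2)).norm),
    hrz, ?_⟩
  intro f hf
  rcases dichotomy ha0 f hf with ⟨s, hs, n, c, _, _, hcon⟩ | ⟨k, c, hk, hktop⟩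
  · refine ⟨s, hs, Or.inl ⟨Hm a n c, ?_⟩⟩
    have : (fun j => f (s j)) = fun _ => Hm a n c := funext hcon
    rw [this]; exact tluo_const
  · refine ⟨id, strictMono_id, Or.inr ?_⟩
    intro K hK _ R _
    filter_upwards [(tendsto_auxT hρ hktop).eventually_gt_atTop R] with n hn2 w hw
    have hw0 : r < ‖w 0‖ := hK hw
    have key : (r / ‖a‖) ^ 2 ^ k n ≤ ‖f n w‖ := by
      rw [(hk n).2.2, norm_Hm]
      refine le_trans ?_ (le_max_left _ _)
      rw [div_pow]
      apply div_le_div₀ (by positivity) (pow_le_pow_left₀ (by linarith) hw0.le _)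
        (by positivity)
      exact pow_le_pow_right₀ (by linarith) (hk n).2.1.le
    calc R < (r / ‖a‖) ^ 2 ^ k n := hn2
      _ ≤ _ := key

lemma fatou_C {a : ℂ} (ha : 1 < ‖a‖) {z : Ck 2} (hz0 : ‖z 0‖ < 1) (hz1 : ‖z 1‖ < 1) :
    z ∈ FatouSet (GenSet (Sg a)) := by
  have ha0 : a ≠ 0 := by
    intro h; rw [h, norm_zero] at ha; linarith
  set r : ℝ := (max ‖z 0‖ ‖z 1‖ + 1) / 2 with hr
  have hr0 : 0 ≤ r := by positivity
  have hr1 : r < 1 := by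
    rw [hr]
    have := max_lt hz0 hz1
    linarith
  have hz0r : ‖z 0‖ < r := by
    rw [hr]; have := le_max_left ‖z 0‖ ‖z 1‖; linarith
  have hz1r : ‖z 1‖ < r := by
    rw [hr]; have := le_max_right ‖z 0‖ ‖z 1‖; linarith
  refine ⟨{w | ‖w 0‖ < r ∧ ‖w 1‖ < r},
    (isOpen_lt ((continuous_apply (0 : Fin 2)).norm) continuous_const).inter
      (isOpen_lt ((continuous_apply (1 : Fin 2)).norm) continuous_const),
    ⟨hz0r, hz1r⟩, ?_⟩
  intro f hf
  rcases dichotomy ha0 f hf with ⟨s, hs, n, c, _, _, hcon⟩ | ⟨k, c, hk, hktop⟩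
  · refine ⟨s, hs, Or.inl ⟨Hm a n c, ?_⟩⟩
    have : (fun j => f (s j)) = fun _ => Hm a n c := funext hcon
    rw [this]; exact tluo_const
  · refine ⟨id, strictMono_id, Or.inl ⟨0, ?_⟩⟩
    apply TendstoUniformlyOn.tendstoLocallyUniformlyOn
    rw [Metric.tendstoUniformlyOn_iff]
    intro ε hε
    filter_upwards [(tendsto_aux0 hr0 hr1 hktop).eventually_lt_const hε] with n hn x hx
    have hb : ‖f n x‖ ≤ r ^ 2 ^ k n := by
      rw [(hk n).2.2, norm_Hm]
      apply max_le
      · refine le_trans (div_le_self (by positivity) (one_le_pow₀ (le_of_lt ha))) ?_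
        exact pow_le_pow_left₀ (norm_nonneg _) hx.1.le _
      · exact pow_le_pow_left₀ (norm_nonneg _) hx.2.le _
    simpa [id_eq, dist_zero_left] using lt_of_le_of_lt hb hn



lemma not_fatou {G : Set (Ck 2 → Ck 2)} {z : Ck 2}
    (h : ∀ δ > (0:ℝ), ∃ F : ℕ → Ck 2 → Ck 2, (∀ n, F n ∈ G) ∧ ∃ p q : Ck 2,
      dist p z < δ ∧ dist q z < δ ∧
      Tendsto (fun n => ‖F n p‖) atTop (𝓝 0) ∧ Tendsto (fun n => ‖F n q‖) atTop atTop) :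
    z ∉ FatouSet G := by
  rintro ⟨U, hUo, hzU, hprop⟩
  obtain ⟨δ, hδ, hball⟩ := Metric.isOpen_iff.1 hUo z hzU
  obtain ⟨F, hFG, p, q, hp, hq, hp0, hqT⟩ := h δ hδ
  have hpU : p ∈ U := hball hp
  have hqU : q ∈ U := hball hq
  obtain ⟨s, hs, hcase⟩ := hprop F hFG
  rcases hcase with ⟨g, hg⟩ | hdiv
  · have h1 : Tendsto (fun n => F (s n) q) atTop (𝓝 (g q)) := hg.tendsto_at hqU
    have h2 : Tendsto (fun n => ‖F (s n) q‖) atTop (𝓝 ‖g q‖) := h1.norm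
    have h3 : Tendsto (fun n => ‖F (s n) q‖) atTop atTop := hqT.comp hs.tendsto_atTop
    exact not_tendsto_nhds_of_tendsto_atTop h3 _ h2
  · have h4 := hdiv {p} (Set.singleton_subset_iff.2 hpU) isCompact_singleton 1 one_pos
    have h5 : Tendsto (fun n => ‖F (s n) p‖) atTop (𝓝 0) := hp0.comp hs.tendsto_atTop
    have h6 : ∀ᶠ n in atTop, ‖F (s n) p‖ < 1 := h5.eventually_lt_const one_pos
    obtain ⟨n, hn1, hn2⟩ := (h4.and h6).exists
    exact absurd (hn1 p rfl) (not_lt.2 hn2.le)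

/-- the recursively chosen exponent sequence -/
def cseq (A r : ℝ) : ℕ → ℕ
  | 0 => 0
  | n+1 => if r ^ 2 ^ (n+1) ≤ A ^ (2 * cseq A r n + 1) then 2 * cseq A r n
           else 2 * cseq A r n + 1

lemma cseq_spec {A r : ℝ} (hA : 1 < A) (hr1 : 1 ≤ r) (hrA : r ≤ A) :
    ∀ n, cseq A r n < 2 ^ n ∧ A ^ cseq A r n ≤ r ^ 2 ^ n ∧ r ^ 2 ^ n ≤ A ^ (cseq A r n + 1) := by
  intro n
  induction n with
  | zero =>
    refine ⟨by norm_num [cseq], ?_, ?_⟩ <;> simp [cseq] <;> assumption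
  | succ n ih =>
    obtain ⟨h1, h2, h3⟩ := ih
    have hA0 : (0:ℝ) < A := by linarith
    have hr0 : (0:ℝ) ≤ r := by linarith
    have hsq : r ^ 2 ^ (n+1) = (r ^ 2 ^ n) ^ 2 := by rw [← pow_mul, pow_succ]
    have hlow : A ^ (2 * cseq A r n) ≤ r ^ 2 ^ (n+1) := by
      have e : A ^ (2 * cseq A r n) = (A ^ cseq A r n) ^ 2 := by rw [mul_comm, pow_mul]
      rw [hsq, e]
      exact pow_le_pow_left₀ (pow_nonneg hA0.le _) h2 2
    have hup : r ^ 2 ^ (n+1) ≤ A ^ (2 * cseq A r n + 2) := by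
      have e : A ^ (2 * cseq A r n + 2) = (A ^ (cseq A r n + 1)) ^ 2 := by
        rw [← pow_mul]; ring_nf
      rw [hsq, e]
      exact pow_le_pow_left₀ (pow_nonneg hr0 _) h3 2
    by_cases hif : r ^ 2 ^ (n+1) ≤ A ^ (2 * cseq A r n + 1)
    · have hc : cseq A r (n+1) = 2 * cseq A r n := by simp [cseq, hif]
      rw [hc]
      refine ⟨by have := Nat.pow_succ 2 n; omega, hlow, hif⟩
    · have hc : cseq A r (n+1) = 2 * cseq A r n + 1 := by simp [cseq, hif]
      rw [hc]
      push_neg at hif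
      refine ⟨by have := Nat.pow_succ 2 n; omega, hif.le, hup⟩

lemma dist_scale (t : ℝ) (u : ℂ) : dist (((1 + t : ℝ) : ℂ) * u) u = |t| * ‖u‖ := by
  rw [dist_eq_norm]
  have e : ((1 + t : ℝ) : ℂ) * u - u = (t : ℂ) * u := by push_cast; ring
  rw [e, norm_mul, Complex.norm_real, Real.norm_eq_abs]

lemma dist_pt {z : Ck 2} {s t C : ℝ} (hC : 0 ≤ C) (hs : |s| * ‖z 0‖ ≤ C)
    (ht : |t| * ‖z 1‖ ≤ C) :
    dist (![((1 + s : ℝ) : ℂ) * z 0, ((1 + t : ℝ) : ℂ) * z 1]) z ≤ C := by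
  rw [dist_pi_le_iff hC]
  intro i
  fin_cases i
  · show dist (((1 + s : ℝ) : ℂ) * z 0) (z 0) ≤ C
    rw [dist_scale]; exact hs
  · show dist (((1 + t : ℝ) : ℂ) * z 1) (z 1) ≤ C
    rw [dist_scale]; exact ht

lemma norm_scaled (t : ℝ) (u : ℂ) (h : 0 ≤ 1 + t) : ‖((1 + t : ℝ) : ℂ) * u‖ = (1 + t) * ‖u‖ := by
  rw [norm_mul, Complex.norm_real, Real.norm_eq_abs, abs_of_nonneg h]

lemma tendsto_succ : Tendsto (fun n : ℕ => n + 1) atTop atTop :=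
  tendsto_add_atTop_nat 1

/-- Julia points with `1 ≤ |z₀| ≤ |a|`, `|z₁| ≤ 1`. -/
lemma julia_B {a : ℂ} (ha : 1 < ‖a‖) {z : Ck 2} (h1 : 1 ≤ ‖z 0‖) (h2 : ‖z 0‖ ≤ ‖a‖)
    (h3 : ‖z 1‖ ≤ 1) : z ∉ FatouSet (GenSet (Sg a)) := by
  have ha0 : a ≠ 0 := by intro h; rw [h, norm_zero] at ha; linarith
  apply not_fatou
  intro δ hδ
  have hA0 : (0:ℝ) < ‖a‖ := by linarith
  set ε : ℝ := min (δ / (2 * ‖a‖)) (1/2) with hεdef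
  have hε0 : 0 < ε := lt_min (by positivity) (by norm_num)
  have hε1 : ε ≤ 1/2 := min_le_right _ _
  have hεa : ε * ‖a‖ < δ := by
    have h' : ε ≤ δ / (2 * ‖a‖) := min_le_left _ _
    have : ε * ‖a‖ ≤ δ / 2 := by
      rw [div_mul_eq_div_div] at h'
      calc ε * ‖a‖ ≤ (δ / 2 / ‖a‖) * ‖a‖ := by nlinarith
        _ = δ / 2 := div_mul_cancel₀ _ (ne_of_gt hA0)
    linarith
  set c : ℕ → ℕ := cseq ‖a‖ ‖z 0‖ with hcdef
  have spec := cseq_spec ha h1 h2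
  refine ⟨fun n => Hm a (n+1) (c (n+1)),
    fun n => Hm_mem ha0 (n+1) (by omega) _ (spec (n+1)).1,
    ![((1 + (-ε) : ℝ) : ℂ) * z 0, ((1 + (-ε) : ℝ) : ℂ) * z 1],
    ![((1 + ε : ℝ) : ℂ) * z 0, ((1 + (-ε) : ℝ) : ℂ) * z 1], ?_, ?_, ?_, ?_⟩
  · refine lt_of_le_of_lt (dist_pt (by positivity) ?_ ?_) hεa
    · rw [abs_neg, abs_of_nonneg hε0.le]
      nlinarith
    · rw [abs_neg, abs_of_nonneg hε0.le]
      nlinarith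
  · refine lt_of_le_of_lt (dist_pt (by positivity) ?_ ?_) hεa
    · rw [abs_of_nonneg hε0.le]
      nlinarith
    · rw [abs_neg, abs_of_nonneg hε0.le]
      nlinarith
  · -- tendsto 0 at p
    have hm : 0 ≤ 1 + (-ε) := by linarith
    have hm1 : 1 + (-ε) < 1 := by linarith
    apply squeeze_zero (fun n => norm_nonneg _) (g := fun n => ‖a‖ * (1 + (-ε)) ^ 2 ^ (n+1))
    · intro n
      rw [norm_Hm]
      simp only [Matrix.cons_val_zero, Matrix.cons_val_one, Matrix.head_cons]
      rw [norm_scaled _ _ hm, norm_scaled _ _ hm]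
      apply max_le
      · rw [mul_pow, mul_div_assoc, mul_comm ‖a‖ ((1 + (-ε)) ^ 2 ^ (n+1))]
        apply mul_le_mul_of_nonneg_left ?_ (pow_nonneg hm _)
        rw [div_le_iff₀ (by positivity)]
        calc ‖z 0‖ ^ 2 ^ (n+1) ≤ ‖a‖ ^ (c (n+1) + 1) := (spec (n+1)).2.2
          _ = ‖a‖ ^ (c (n+1)) * ‖a‖ := pow_succ _ _
          _ = ‖a‖ * ‖a‖ ^ (c (n+1)) := mul_comm _ _
      · calc ((1 + (-ε)) * ‖z 1‖) ^ 2 ^ (n+1) ≤ (1 + (-ε)) ^ 2 ^ (n+1) := by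
              apply pow_le_pow_left₀ (by positivity)
              nlinarith
          _ ≤ ‖a‖ * (1 + (-ε)) ^ 2 ^ (n+1) := le_mul_of_one_le_left (by positivity) ha.le
    · have := (tendsto_aux0 hm hm1 tendsto_succ).const_mul ‖a‖
      simpa using this
  · -- tendsto atTop at q
    have hq1 : 1 < 1 + ε := by linarith
    apply tendsto_atTop_mono (f := fun n => (1 + ε) ^ 2 ^ (n+1))
    · intro n
      rw [norm_Hm]
      simp only [Matrix.cons_val_zero, Matrix.cons_val_one, Matrix.head_cons]
      refine le_trans ?_ (le_max_left _ _)
      rw [norm_scaled _ _ (by linarith), mul_pow, mul_div_assoc]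
      refine le_mul_of_one_le_right (by positivity) ?_
      rw [le_div_iff₀ (by positivity)]
      simpa using (spec (n+1)).2.1
    · exact tendsto_auxT hq1 tendsto_succ

/-- Julia points with `|z₀| ≤ 1`, `|z₁| = 1`. -/
lemma julia_A {a : ℂ} (ha : 1 < ‖a‖) {z : Ck 2} (h1 : ‖z 0‖ ≤ 1) (h2 : ‖z 1‖ = 1) :
    z ∉ FatouSet (GenSet (Sg a)) := by
  have ha0 : a ≠ 0 := by intro h; rw [h, norm_zero] at ha; linarith
  apply not_fatou
  intro δ hδ
  set ε : ℝ := min (δ / 2) (1/2) with hεdef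
  have hε0 : 0 < ε := lt_min (by positivity) (by norm_num)
  have hε1 : ε ≤ 1/2 := min_le_right _ _
  have hεδ : ε < δ := lt_of_le_of_lt (min_le_left _ _) (by linarith)
  refine ⟨fun n => Hm a (n+1) 0,
    fun n => Hm_mem ha0 (n+1) (by omega) 0 (by positivity),
    ![((1 + (-ε) : ℝ) : ℂ) * z 0, ((1 + (-ε) : ℝ) : ℂ) * z 1],
    ![((1 + (-ε) : ℝ) : ℂ) * z 0, ((1 + ε : ℝ) : ℂ) * z 1], ?_, ?_, ?_, ?_⟩
  · refine lt_of_le_of_lt (dist_pt hε0.le ?_ ?_) hεδ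
    · rw [abs_neg, abs_of_nonneg hε0.le]; nlinarith
    · rw [abs_neg, abs_of_nonneg hε0.le, h2]; nlinarith
  · refine lt_of_le_of_lt (dist_pt hε0.le ?_ ?_) hεδ
    · rw [abs_neg, abs_of_nonneg hε0.le]; nlinarith
    · rw [abs_of_nonneg hε0.le, h2]; nlinarith
  · have hm : 0 ≤ 1 + (-ε) := by linarith
    have hm1 : 1 + (-ε) < 1 := by linarith
    apply squeeze_zero (fun n => norm_nonneg _) (g := fun n => (1 + (-ε)) ^ 2 ^ (n+1))
    · intro n
      rw [norm_Hm]
      simp only [Matrix.cons_val_zero, Matrix.cons_val_one, Matrix.head_cons, pow_zero,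
        div_one]
      rw [norm_scaled _ _ hm, norm_scaled _ _ hm]
      apply max_le <;>
      · apply pow_le_pow_left₀ (by positivity)
        nlinarith [h2]
    · exact tendsto_aux0 hm hm1 tendsto_succ
  · have hq1 : 1 < 1 + ε := by linarith
    apply tendsto_atTop_mono (f := fun n => (1 + ε) ^ 2 ^ (n+1))
    · intro n
      rw [norm_Hm]
      simp only [Matrix.cons_val_zero, Matrix.cons_val_one, Matrix.head_cons]
      refine le_trans ?_ (le_max_right _ _)
      rw [norm_scaled _ _ (by linarith), h2, mul_one]
    · exact tendsto_auxT hq1 tendsto_succ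


end Stmt7

open Stmt7 in
/-- For `f(z₁,z₂) = (z₁², z₂²)` and `g(z₁,z₂) = (z₁²/a, z₂²)` with `|a| > 1`, the Julia
set of `G = ⟨f, g⟩` is `({|z₁| ≤ 1} × {|z₂| = 1}) ∪ ({1 ≤ |z₁| ≤ |a|} × {|z₂| ≤ 1})`;
in particular `J(G)` is not forward invariant under `G`. -/
theorem stmt_7 (a : ℂ) (ha : 1 < ‖a‖) :
    JuliaSet (GenSet {(fun z : Ck 2 => ![z 0 ^ 2, z 1 ^ 2]),
        (fun z : Ck 2 => ![z 0 ^ 2 / a, z 1 ^ 2])}) =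
      ({z : Ck 2 | ‖z 0‖ ≤ 1 ∧ ‖z 1‖ = 1} ∪
        {z : Ck 2 | 1 ≤ ‖z 0‖ ∧ ‖z 0‖ ≤ ‖a‖ ∧
          ‖z 1‖ ≤ 1}) ∧
    ¬ (∀ φ ∈ GenSet {(fun z : Ck 2 => ![z 0 ^ 2, z 1 ^ 2]),
          (fun z : Ck 2 => ![z 0 ^ 2 / a, z 1 ^ 2])},
        φ '' JuliaSet (GenSet {(fun z : Ck 2 => ![z 0 ^ 2, z 1 ^ 2]),
            (fun z : Ck 2 => ![z 0 ^ 2 / a, z 1 ^ 2])}) ⊆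
          JuliaSet (GenSet {(fun z : Ck 2 => ![z 0 ^ 2, z 1 ^ 2]),
            (fun z : Ck 2 => ![z 0 ^ 2 / a, z 1 ^ 2])})) := by
  have han : 1 < ‖a‖ := by exact ha
  have hJ : JuliaSet (GenSet (Sg a)) =
      ({z : Ck 2 | ‖z 0‖ ≤ 1 ∧ ‖z 1‖ = 1} ∪
        {z : Ck 2 | 1 ≤ ‖z 0‖ ∧ ‖z 0‖ ≤ ‖a‖ ∧
          ‖z 1‖ ≤ 1}) := by
    ext z
    simp only [JuliaSet, Set.mem_compl_iff, Set.mem_union, Set.mem_setOf_eq]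
    constructor
    · intro hz
      by_contra hcl
      push_neg at hcl
      obtain ⟨hc1, hc2⟩ := hcl
      apply hz
      rcases lt_or_ge 1 ‖z 1‖ with h | h
      · exact fatou_A han h
      · rcases lt_or_ge ‖a‖ ‖z 0‖ with h0 | h0
        · exact fatou_B han h0
        · have hz0 : ‖z 0‖ < 1 := by
            by_contra h'
            push_neg at h'
            exact absurd (hc2 h' h0) (not_lt.2 h)
          have hz1 : ‖z 1‖ < 1 := lt_of_le_of_ne h (hc1 hz0.le)
          exact fatou_C han hz0 hz1
    · rintro (⟨p1, p2⟩ | ⟨p1, p2, p3⟩)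
      · exact julia_A han p1 p2
      · exact julia_B han p1 p2 p3
  refine ⟨hJ, ?_⟩
  intro hinv
  have hfmem : (fun w : Ck 2 => ![w 0 ^ 2, w 1 ^ 2]) ∈ GenSet (Sg a) :=
    SemigroupGen.base (Set.mem_insert _ _)
  have hwJ : (![a, 0] : Ck 2) ∈ JuliaSet (GenSet (Sg a)) := by
    rw [hJ]
    right
    refine ⟨?_, ?_, ?_⟩ <;> simp [ha.le]
  have himg : (![(![a,0] : Ck 2) 0 ^ 2, (![a,0] : Ck 2) 1 ^ 2] : Ck 2) ∈
      JuliaSet (GenSet (Sg a)) := hinv _ hfmem (Set.mem_image_of_mem _ hwJ)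
  rw [hJ] at himg
  simp only [Set.mem_union, Set.mem_setOf_eq, Matrix.cons_val_zero, Matrix.cons_val_one,
    Matrix.head_cons, map_pow, norm_pow] at himg
  rcases himg with ⟨q1, q2⟩ | ⟨q1, q2, q3⟩
  · simp at q2
  · nlinarith [q2, ha]
end
end

section
/- Let k ≥ 2, let G be a semigroup generated by holomorphic endomorphisms of ℂ^k of maximal generic rank k, and let Ω be a connected component of F(G). Then Ω is recurrent if and only if for every sequence (φ_j) in G there exist a compact set K ⊆ Ω, a subsequence (φ_{j_m}), and points p_{j_m} ∈ K such that φ_{j_m}(p_{j_m}) converges to some point p_0 ∈ Ω. -/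
open Set Filter Metric Topology

noncomputable section

/-- A Fatou component `Ω` of `G` is recurrent iff for every sequence in `G` there are a
compact `K ⊆ Ω`, a subsequence `(φ_{j_m})` and points `p_{j_m} ∈ K` with
`φ_{j_m}(p_{j_m}) → p_0 ∈ Ω`. -/
theorem stmt_14 {k : ℕ} (hk : 2 ≤ k) (S : Set (Ck k → Ck k))
    (hhol : ∀ f ∈ S, Differentiable ℂ f)
    (hrank : ∀ f ∈ S, ∃ z, jacDet f z ≠ 0)
    (Ω : Set (Ck k)) (hΩ : IsFatouComponent (GenSet S) Ω) :
    Recurrent (GenSet S) Ω ↔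
      ∀ g : ℕ → Ck k → Ck k, (∀ j, g j ∈ GenSet S) →
        ∃ K ⊆ Ω, IsCompact K ∧ ∃ s : ℕ → ℕ, StrictMono s ∧
          ∃ p : ℕ → Ck k, (∀ m, p m ∈ K) ∧ ∃ p0 ∈ Ω,
            Tendsto (fun m => g (s m) (p m)) atTop (𝓝 p0) := by
  constructor
  · intro hrec g hg
    obtain ⟨s, hs, p, hp, p0, hp0, htend⟩ := hrec g hg
    exact ⟨{p}, singleton_subset_iff.2 hp, isCompact_singleton, s, hs,
      fun _ => p, fun _ => rfl, p0, hp0, htend⟩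
  · intro H g hg
    obtain ⟨K, hKΩ, hKc, s, hs, p, hpK, p0, hp0, htend⟩ := H g hg
    -- extract a convergent subsequence of the points p m
    obtain ⟨q, hqK, t, ht, hqt⟩ := hKc.tendsto_subseq hpK
    have hqΩ : q ∈ Ω := hKΩ hqK
    -- q is in the Fatou set
    obtain ⟨z, hzF, rfl⟩ := hΩ
    have hqF : q ∈ FatouSet (GenSet S) :=
      connectedComponentIn_subset (FatouSet (GenSet S)) z hqΩ
    obtain ⟨U, hUopen, hqU, hU⟩ := hqF
    -- apply the Fatou property to the subsequence
    obtain ⟨s2, hs2, hdic⟩ := hU (fun i => g (s (t i))) (fun i => hg _)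
    set F : ℕ → Ck k → Ck k := fun i => g (s (t (s2 i))) with hF
    set x : ℕ → Ck k := fun i => p (t (s2 i)) with hx
    have hxq : Tendsto x atTop (𝓝 q) := hqt.comp hs2.tendsto_atTop
    have hFx : Tendsto (fun i => F i (x i)) atTop (𝓝 p0) := by
      have : Tendsto (fun i => t (s2 i)) atTop atTop :=
        ht.tendsto_atTop.comp hs2.tendsto_atTop
      exact htend.comp this
    -- a compact closed ball around q inside U
    obtain ⟨r, hr, hrU⟩ := (Metric.nhds_basis_closedBall.mem_iff).1
      (hUopen.mem_nhds hqU)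
    have hxB : ∀ᶠ i in atTop, x i ∈ closedBall q r := by
      filter_upwards [hxq (Metric.closedBall_mem_nhds q hr)] with i hi using hi
    -- all maps in the generated semigroup are differentiable, hence continuous
    have hdiff : ∀ f, SemigroupGen S f → Differentiable ℂ f := by
      intro f hf
      induction hf with
      | base h => exact hhol _ h
      | comp h1 h2 ih1 ih2 => exact ih1.comp ih2
    rcases hdic with ⟨h, hh⟩ | hdiv
    · -- convergence case
      have hUnif : TendstoUniformlyOn (fun i => F i) h atTop (closedBall q r) :=
        ((tendstoLocallyUniformlyOn_iff_forall_isCompact hUopen).1 hh)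
          (closedBall q r) hrU (isCompact_closedBall q r)
      have hcont : ContinuousOn h (closedBall q r) :=
        hUnif.continuousOn (Eventually.frequently <| Eventually.of_forall fun i =>
          ((hdiff _ (hg (s (t (s2 i))))).continuous).continuousOn)
      have hxqB : Tendsto x atTop (𝓝[closedBall q r] q) :=
        tendsto_nhdsWithin_of_tendsto_nhds_of_eventually_within x hxq hxB
      have hFxh : Tendsto (fun i => F i (x i)) atTop (𝓝 (h q)) :=
        hUnif.tendsto_comp (hcont q (mem_closedBall_self hr.le)) hxqB
      have hhq : h q = p0 := tendsto_nhds_unique hFxh hFx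
      refine ⟨fun i => s (t (s2 i)), (hs.comp ht).comp hs2, q, hqΩ, p0, hp0, ?_⟩
      have := hUnif.tendsto_at (mem_closedBall_self hr.le)
      rwa [hhq] at this
    · -- divergence case: contradiction
      exfalso
      have hbd : ∀ᶠ i in atTop, ‖F i (x i)‖ < ‖p0‖ + 1 :=
        (hFx.norm).eventually_lt_const (by linarith [norm_nonneg p0])
      have hdiv' := hdiv (closedBall q r) hrU (isCompact_closedBall q r)
        (‖p0‖ + 1) (by positivity)
      obtain ⟨i, h1, h2, h3⟩ := (hxB.and (hbd.and hdiv')).exists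
      exact absurd (h3 (x i) h1) (not_lt.2 h2.le)
end
end

section
/- Let k ≥ 2, let φ : ℂ^k → ℂ^k be holomorphic, and let Ω ⊆ ℂ^k be a connected open set with φ(Ω) ⊆ Ω. Suppose some subsequence (φ^{n_j}) of the iterates of φ converges uniformly on compact subsets of Ω to the constant map with value p_0 ∈ Ω. Then φ(p_0) = p_0, and p_0 is an attracting fixed point of φ, i.e., every eigenvalue of the complex derivative Dφ(p_0) has modulus strictly less than 1. -/
open Set Filter Metric Topology

noncomputable section

/-- If a subsequence of iterates of a holomorphic map `φ` converges locally uniformly on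
a forward-invariant connected open set `Ω` to the constant `p_0 ∈ Ω`, then `p_0` is an
attracting fixed point of `φ`. -/
theorem stmt_16 {k : ℕ} (hk : 2 ≤ k) (φ : Ck k → Ck k)
    (hhol : Differentiable ℂ φ)
    (Ω : Set (Ck k)) (hΩopen : IsOpen Ω) (hΩconn : IsConnected Ω)
    (hinv : φ '' Ω ⊆ Ω) (p0 : Ck k) (hp0 : p0 ∈ Ω)
    (n : ℕ → ℕ) (hn : StrictMono n)
    (hconv : TendstoLocallyUniformlyOn (fun j => φ^[n j]) (fun _ => p0) atTop Ω) :
    φ p0 = p0 ∧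
    ∀ μ : ℂ, Module.End.HasEigenvalue ((fderiv ℂ φ p0).toLinearMap) μ →
      ‖μ‖ < 1 := by
  have hφp0 : φ p0 ∈ Ω := hinv ⟨p0, hp0, rfl⟩
  -- pointwise convergence
  have hpt : ∀ x ∈ Ω, Tendsto (fun j => φ^[n j] x) atTop (𝓝 p0) := fun x hx =>
    hconv.tendsto_at hx
  have hfix : φ p0 = p0 := by
    have h1 : Tendsto (fun j => φ^[n j] (φ p0)) atTop (𝓝 p0) := hpt _ hφp0
    have h2 : Tendsto (fun j => φ (φ^[n j] p0)) atTop (𝓝 (φ p0)) :=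
      (hhol.continuous.tendsto p0).comp (hpt _ hp0)
    have heq : (fun j => φ^[n j] (φ p0)) = fun j => φ (φ^[n j] p0) := by
      funext j
      rw [← Function.iterate_succ_apply, Function.iterate_succ_apply']
    rw [heq] at h1
    exact tendsto_nhds_unique h2 h1
  refine ⟨hfix, ?_⟩
  intro μ hμ
  by_contra hcon
  push_neg at hcon
  obtain ⟨v, hv⟩ := hμ.exists_hasEigenvector
  have hvne : v ≠ 0 := hv.2
  have hvL : (fderiv ℂ φ p0) v = μ • v := hv.apply_eq_smul
  -- the derivative of the m-th iterate at p0 applied to v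
  have hiter : ∀ m, fderiv ℂ (φ^[m]) p0 v = μ ^ m • v := by
    intro m
    induction m with
    | zero => simp
    | succ m ih =>
      have hd1 : DifferentiableAt ℂ φ (φ^[m] p0) := hhol.differentiableAt
      have hd2 : DifferentiableAt ℂ (φ^[m]) p0 :=
        (hhol.iterate m).differentiableAt
      have : fderiv ℂ (φ^[m + 1]) p0 = (fderiv ℂ φ (φ^[m] p0)).comp (fderiv ℂ (φ^[m]) p0) := by
        rw [Function.iterate_succ']
        exact fderiv_comp p0 hd1 hd2
      rw [this]
      simp only [ContinuousLinearMap.comp_apply, ih, Function.iterate_fixed hfix m, map_smul,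
        hvL, smul_smul, pow_succ]
  -- restrict to the complex line through p0 in direction v
  obtain ⟨r, hr, hball⟩ := Metric.isOpen_iff.1 hΩopen p0 hp0
  set ι : ℂ → Ck k := fun t => p0 + t • v with hι
  have hιcont : Continuous ι := by fun_prop
  set D : Set ℂ := ι ⁻¹' (Metric.ball p0 r) with hD
  have hDopen : IsOpen D := (Metric.isOpen_ball).preimage hιcont
  have h0D : (0 : ℂ) ∈ D := by simp [hD, hι, hr]
  have hmaps : MapsTo ι D Ω := fun t ht => hball ht
  have hcomp : TendstoLocallyUniformlyOn (fun j => (φ^[n j]) ∘ ι) ((fun _ => p0) ∘ ι) atTop D :=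
    hconv.comp ι hmaps hιcont.continuousOn
  have hdiff : ∀ᶠ j in atTop, DifferentiableOn ℂ ((φ^[n j]) ∘ ι) D := by
    filter_upwards with j
    exact ((hhol.iterate (n j)).comp (by fun_prop)).differentiableOn
  have hderiv := hcomp.deriv hdiff hDopen
  have hd0 : Tendsto (fun j => deriv ((φ^[n j]) ∘ ι) 0) atTop (𝓝 (deriv ((fun _ => p0) ∘ ι) 0)) :=
    hderiv.tendsto_at h0D
  have hconstderiv : deriv ((fun _ : Ck k => p0) ∘ ι) 0 = 0 := by
    simp [Function.comp_def]
  rw [hconstderiv] at hd0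
  have hcalc : ∀ j, deriv ((φ^[n j]) ∘ ι) 0 = μ ^ (n j) • v := by
    intro j
    have hιd : HasDerivAt ι v 0 := by
      have : HasDerivAt (fun t : ℂ => t • v) ((1 : ℂ) • v) 0 := (hasDerivAt_id 0).smul_const v
      simpa [hι] using this.const_add p0
    have hF : HasFDerivAt (φ^[n j]) (fderiv ℂ (φ^[n j]) p0) (ι 0) := by
      have : ι 0 = p0 := by simp [hι]
      rw [this]
      exact ((hhol.iterate (n j)).differentiableAt).hasFDerivAt
    have := (hF.comp_hasDerivAt 0 hιd).deriv
    rw [this, hiter]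
  simp only [hcalc] at hd0
  have hnorm : Tendsto (fun j => ‖μ ^ (n j) • v‖) atTop (𝓝 0) := by
    simpa using hd0.norm
  have hge : ∀ j, ‖v‖ ≤ ‖μ ^ (n j) • v‖ := by
    intro j
    rw [norm_smul, norm_pow]
    nlinarith [one_le_pow₀ (by simpa using hcon : 1 ≤ ‖μ‖) (n := n j),
      norm_nonneg v]
  have : ‖v‖ ≤ 0 := le_of_tendsto_of_tendsto tendsto_const_nhds hnorm
    (Eventually.of_forall hge)
  exact hvne (norm_le_zero_iff.1 this)
end
end

section
/- Let k ≥ 2, let φ : ℂ^k → ℂ^k be holomorphic, and let Ω ⊆ ℂ^k be a connected open set with φ(Ω) ⊆ Ω. Suppose some subsequence (φ^{p_j}) of the iterates of φ, with p_j → ∞, converges uniformly on compact subsets of Ω to the identity map of Ω. Then φ restricted to Ω is a bijection of Ω onto Ω, i.e., φ is an automorphism of Ω. -/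
open Set Filter Metric Topology

noncomputable section

open Complex NNReal

/-- Cauchy estimate: if `g` is entire and bounded by `ε` on `closedBall y (2*r)`, then
its derivative is bounded by `ε / r` on `closedBall y r`. -/
lemma cauchy_fderiv_bound {k : ℕ} (g : Ck k → Ck k) (hg : Differentiable ℂ g)
    (y : Ck k) (r ε : ℝ) (hr : 0 < r)
    (hε : ∀ z ∈ closedBall y (2 * r), ‖g z‖ ≤ ε) :
    ∀ z ∈ closedBall y r, ‖fderiv ℂ g z‖ ≤ ε / r := by
  have hε0 : 0 ≤ ε := le_trans (norm_nonneg _) (hε y (mem_closedBall_self (by positivity)))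
  intro z hz
  refine ContinuousLinearMap.opNorm_le_bound _ (by positivity) fun v => ?_
  rcases eq_or_ne v 0 with rfl | hv
  · simp
  · have hvn : 0 < ‖v‖ := norm_pos_iff.mpr hv
    set ρ : ℝ := r / ‖v‖ with hρdef
    have hρ : 0 < ρ := by positivity
    set h : ℂ → Ck k := fun t => g (z + t • v) with hh
    have hhd : Differentiable ℂ h := by
      intro t
      exact (hg _).comp t (by fun_prop)
    have hder : HasDerivAt h (fderiv ℂ g z v) 0 := by
      have h1 : HasDerivAt (fun t : ℂ => z + t • v) ((1:ℂ) • v) 0 :=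
        ((hasDerivAt_id (0:ℂ)).smul_const v).const_add z
      have h2 := ((hg (z + (0:ℂ) • v)).hasFDerivAt).comp_hasDerivAt 0 h1
      have h3 : HasDerivAt (g ∘ fun t : ℂ => z + t • v) (fderiv ℂ g z v) 0 := by simpa using h2
      exact h3
    have hsph : ∀ w ∈ sphere (0:ℂ) ρ, ‖h w‖ ≤ ε := by
      intro w hw
      apply hε
      simp only [mem_sphere_iff_norm, sub_zero] at hw
      have : ‖z + w • v - y‖ ≤ ‖z - y‖ + ‖w • v‖ := by
        calc ‖z + w • v - y‖ = ‖(z - y) + w • v‖ := by ring_nf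
        _ ≤ ‖z - y‖ + ‖w • v‖ := norm_add_le _ _
      have h3 : ‖w • v‖ = r := by
        rw [norm_smul, hw, hρdef]; field_simp
      have h4 : ‖z - y‖ ≤ r := by rwa [mem_closedBall, dist_eq_norm] at hz
      rw [mem_closedBall, dist_eq_norm]
      calc ‖z + w • v - y‖ ≤ ‖z - y‖ + ‖w • v‖ := this
        _ ≤ r + r := by rw [h3]; linarith
        _ = 2 * r := by ring
    have hcd : cderiv ρ h 0 = deriv h 0 :=
      cderiv_eq_deriv isOpen_univ hhd.differentiableOn hρ (subset_univ _)
    have := norm_cderiv_le hρ hsph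
    rw [hcd, hder.deriv] at this
    calc ‖fderiv ℂ g z v‖ ≤ ε / ρ := this
      _ = ε / r * ‖v‖ := by rw [hρdef, div_div_eq_mul_div]; ring

/-- If an entire map `F` is within `r/2` of the identity on `closedBall y (2*r)`, then
`y` is in the image of `closedBall y r`. -/
lemma surj_of_close_to_id {k : ℕ} (F : Ck k → Ck k) (hF : Differentiable ℂ F)
    (y : Ck k) (r : ℝ) (hr : 0 < r)
    (hclose : ∀ z ∈ closedBall y (2 * r), ‖F z - z‖ ≤ r / 2) :
    ∃ z₀ ∈ closedBall y r, F z₀ = y := by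
  set g : Ck k → Ck k := fun z => F z - z with hg
  have hgd : Differentiable ℂ g := hF.sub differentiable_id
  have hbd := cauchy_fderiv_bound g hgd y r (r / 2) hr hclose
  have hlip : ∀ a ∈ closedBall y r, ∀ b ∈ closedBall y r,
      ‖g a - g b‖ ≤ (1/2 : ℝ) * ‖a - b‖ := by
    intro a ha b hb
    have := (convex_closedBall y r).norm_image_sub_le_of_norm_fderiv_le
      (fun x _ => hgd x) (fun x hx => by
        have := hbd x hx
        calc ‖fderiv ℂ g x‖ ≤ (r/2) / r := this
          _ = 1/2 := by rw [div_right_comm, div_self hr.ne']) hb ha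
    exact this
  set H : Ck k → Ck k := fun z => y - g z with hH
  have hmaps : MapsTo H (closedBall y r) (closedBall y r) := by
    intro z hz
    have : ‖H z - y‖ ≤ r / 2 := by
      have h2 : H z - y = z - F z := by simp only [hH, hg]; ring
      rw [h2, norm_sub_rev]
      exact hclose z (closedBall_subset_closedBall (by linarith) hz)
    rw [mem_closedBall, dist_eq_norm]
    linarith
  have hcontr : ContractingWith (1/2 : ℝ≥0) (hmaps.restrict H _ _) := by
    constructor
    · exact one_half_lt_one
    · apply LipschitzWith.of_dist_le_mul
      rintro ⟨a, ha⟩ ⟨b, hb⟩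
      simp only [Subtype.dist_eq, MapsTo.val_restrict_apply]
      rw [dist_eq_norm, dist_eq_norm]
      have h2 : H a - H b = -(g a - g b) := by simp only [hH]; ring
      rw [h2, norm_neg]
      calc ‖g a - g b‖ ≤ (1/2:ℝ) * ‖a - b‖ := hlip a ha b hb
        _ = ((1/2 : ℝ≥0) : ℝ) * ‖a - b‖ := by norm_num
  obtain ⟨z₀, hz₀, hfix, -⟩ := hcontr.exists_fixedPoint'
    (isClosed_closedBall.isComplete) hmaps (mem_closedBall_self hr.le) (edist_ne_top _ _)
  refine ⟨z₀, hz₀, ?_⟩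
  have : y - (F z₀ - z₀) = z₀ := hfix
  have h2 : y - F z₀ = 0 := by
    have := congrArg (· - z₀) this
    simpa [sub_sub] using this
  have := sub_eq_zero.mp h2
  exact this.symm

/-- If a subsequence `(φ^{p_j})` of iterates of a holomorphic map `φ`, with `p_j → ∞`,
converges locally uniformly to the identity on a forward-invariant connected open set
`Ω`, then `φ` is an automorphism of `Ω`. -/
theorem stmt_17 {k : ℕ} (hk : 2 ≤ k) (φ : Ck k → Ck k)
    (hhol : Differentiable ℂ φ)
    (Ω : Set (Ck k)) (hΩopen : IsOpen Ω) (hΩconn : IsConnected Ω)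
    (hinv : φ '' Ω ⊆ Ω)
    (p : ℕ → ℕ) (hp : StrictMono p)
    (hconv : TendstoLocallyUniformlyOn (fun j => φ^[p j]) id atTop Ω) :
    Set.BijOn φ Ω Ω := by
  have hmapsφ : MapsTo φ Ω Ω := fun x hx => hinv ⟨x, hx, rfl⟩
  have hiter : ∀ n, MapsTo φ^[n] Ω Ω := by
    intro n
    induction n with
    | zero => simp [MapsTo]
    | succ n ih => rw [Function.iterate_succ]; exact ih.comp hmapsφ
  refine ⟨hmapsφ, ?_, ?_⟩
  · -- injectivity
    intro a ha b hb hab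
    have hta : Tendsto (fun j => φ^[p j] a) atTop (𝓝 a) := by
      simpa using hconv.tendsto_at ha
    have htb : Tendsto (fun j => φ^[p j] b) atTop (𝓝 b) := by
      simpa using hconv.tendsto_at hb
    have heq : ∀ᶠ j in atTop, φ^[p j] a = φ^[p j] b := by
      filter_upwards [eventually_ge_atTop 1] with j hj
      have hpj : 1 ≤ p j := le_trans hj (hp.le_apply)
      have h1 : φ^[p j] a = φ^[p j - 1] (φ a) := by
        conv_lhs => rw [show p j = (p j - 1) + 1 by omega, Function.iterate_succ_apply]
      have h2 : φ^[p j] b = φ^[p j - 1] (φ b) := by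
        conv_lhs => rw [show p j = (p j - 1) + 1 by omega, Function.iterate_succ_apply]
      rw [h1, h2, hab]
    exact tendsto_nhds_unique (hta.congr' heq) htb
  · -- surjectivity
    intro y hy
    obtain ⟨ε, hε, hball⟩ := Metric.isOpen_iff.mp hΩopen y hy
    set r : ℝ := ε / 3 with hrdef
    have hr : 0 < r := by positivity
    have hKsub : closedBall y (2 * r) ⊆ Ω := by
      refine subset_trans ?_ hball
      intro z hz
      rw [mem_closedBall] at hz
      rw [mem_ball]
      calc dist z y ≤ 2 * r := hz
        _ < ε := by rw [hrdef]; linarith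
    have hKc : IsCompact (closedBall y (2 * r)) := isCompact_closedBall _ _
    have hunif : TendstoUniformlyOn (fun j => φ^[p j]) id atTop (closedBall y (2 * r)) :=
      (tendstoLocallyUniformlyOn_iff_forall_isCompact hΩopen).mp hconv _ hKsub hKc
    have hev : ∀ᶠ j in atTop, ∀ z ∈ closedBall y (2 * r),
        dist (id z) (φ^[p j] z) < r / 2 :=
      (Metric.tendstoUniformlyOn_iff.mp hunif) (r/2) (by positivity)
    obtain ⟨j, hj1, hjev⟩ := (hev.and (eventually_ge_atTop 1)).exists
    have hpj : 1 ≤ p j := le_trans hjev (hp.le_apply)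
    have hclose : ∀ z ∈ closedBall y (2 * r), ‖φ^[p j] z - z‖ ≤ r / 2 := by
      intro z hz
      have := hj1 z hz
      rw [dist_comm, dist_eq_norm] at this
      exact le_of_lt (by simpa using this)
    obtain ⟨z₀, hz₀, hFz₀⟩ := surj_of_close_to_id (φ^[p j]) (hhol.iterate _) y r hr hclose
    have hz₀Ω : z₀ ∈ Ω := hKsub (closedBall_subset_closedBall (by linarith) hz₀)
    refine ⟨φ^[p j - 1] z₀, hiter _ hz₀Ω, ?_⟩
    have : φ (φ^[p j - 1] z₀) = φ^[p j] z₀ := by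
      conv_rhs => rw [show p j = (p j - 1) + 1 by omega, Function.iterate_succ_apply']
    rw [this, hFz₀]
end
end

section
/- Let k ≥ 2 and let G = ⟨φ_1, …, φ_m⟩ be a semigroup generated by finitely many volume-preserving biholomorphisms of ℂ^k (holomorphic automorphisms of ℂ^k whose complex Jacobian determinant has modulus 1 at every point). Let Ω be a Fatou component of G that is invariant, i.e., φ(Ω) ⊆ Ω for every φ ∈ G. Then either Ω is recurrent, or there exists a sequence (φ_n) in G that diverges uniformly to infinity on compact subsets of Ω. -/
open Set Filter Metric Topology

noncomputable section

section AuxDetLemmas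

open Matrix Polynomial

lemma aux_det_one_add {n R : Type*} [Fintype n] [DecidableEq n] [CommRing R] [IsDomain R]
    {M : Matrix n n R} (h : M * M = 0) : (1 + M).det = 1 := by
  have key : ∀ A : Matrix n n R[X], A = (X : R[X]) • M.map C → (1 + M).det = 1 := by
    intro A hA
    have hAA : A * A = 0 := by
      rw [hA, Matrix.smul_mul, Matrix.mul_smul, ← Matrix.map_mul, h]
      simp
    have hmul : (1 + A) * (1 - A) = 1 := by
      have : (1 + A) * (1 - A) = 1 - A * A := by
        rw [mul_sub, mul_one, add_mul, one_mul, ← sub_sub, add_sub_cancel_right]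
      rw [this, hAA, sub_zero]
    have hunit : IsUnit (1 + A).det := by
      refine IsUnit.of_mul_eq_one (1 - A).det ?_
      rw [← det_mul, hmul, det_one]
    obtain ⟨r, -, hr⟩ := Polynomial.isUnit_iff.mp hunit
    have heval : ∀ t : R, ((1 + A).det).eval t = (1 + t • M).det := by
      intro t
      rw [← Polynomial.coe_evalRingHom, RingHom.map_det]
      congr 1
      ext i j
      rw [RingHom.mapMatrix_apply, Matrix.map_apply, Matrix.add_apply, hA, Matrix.smul_apply,
        Matrix.map_apply, smul_eq_mul, map_add, Matrix.add_apply, Matrix.smul_apply, smul_eq_mul]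
      rw [coe_evalRingHom, eval_mul, eval_X, eval_C]
      congr 1
      by_cases hij : i = j
      · rw [hij, Matrix.one_apply_eq, Matrix.one_apply_eq, eval_one]
      · rw [Matrix.one_apply_ne hij, Matrix.one_apply_ne hij, eval_zero]
    have h0 : r = 1 := by
      have := heval 0
      rw [← hr] at this
      simpa using this
    have h1 := heval 1
    rw [← hr, h0] at h1
    simpa using h1.symm
  exact key _ rfl

lemma aux_det_one_add_lin {V : Type*} [AddCommGroup V] [Module ℝ V] [FiniteDimensional ℝ V]
    {N : V →ₗ[ℝ] V} (h : N ∘ₗ N = 0) : LinearMap.det (LinearMap.id + N) = 1 := by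
  classical
  let b := Module.finBasis ℝ V
  rw [← LinearMap.det_toMatrix b]
  have : LinearMap.toMatrix b b (LinearMap.id + N) = 1 + LinearMap.toMatrix b b N := by
    rw [map_add, LinearMap.toMatrix_id]
  rw [this]
  apply aux_det_one_add
  rw [← LinearMap.toMatrix_comp b b b, h, map_zero]

lemma aux_restrict_comp {V : Type*} [AddCommGroup V] [Module ℂ V]
    (f g : V →ₗ[ℂ] V) : (f ∘ₗ g).restrictScalars ℝ =
      (f.restrictScalars ℝ) ∘ₗ (g.restrictScalars ℝ) := rfl

lemma aux_det_restrict {k : ℕ} (L : (Fin k → ℂ) →ₗ[ℂ] (Fin k → ℂ)) :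
    LinearMap.det (L.restrictScalars ℝ) = Complex.normSq (LinearMap.det L) := by
  classical
  suffices H : ∀ M : Matrix (Fin k) (Fin k) ℂ,
      LinearMap.det ((Matrix.toLin' M).restrictScalars ℝ) = Complex.normSq M.det by
    have := H (LinearMap.toMatrix' L)
    rwa [Matrix.toLin'_toMatrix', LinearMap.det_toMatrix'] at this
  intro M
  induction M using Matrix.diagonal_transvection_induction with
  | hdiag D _ =>
    let b : Module.Basis ((_ : Fin k) × Fin 2) ℝ (Fin k → ℂ) :=
      Pi.basis fun _ : Fin k => Complex.basisOneI
    rw [← LinearMap.det_toMatrix b]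
    have hmat : ∀ p q : (_ : Fin k) × Fin 2,
        LinearMap.toMatrix b b ((Matrix.toLin' (diagonal D)).restrictScalars ℝ) p q =
          if p.1 = q.1 then Algebra.leftMulMatrix Complex.basisOneI (D p.1) p.2 q.2 else 0 := by
      rintro ⟨i, s⟩ ⟨j, t⟩
      rw [LinearMap.toMatrix_apply]
      have hbq : b ⟨j, t⟩ = Pi.single j (Complex.basisOneI t) := by
        simp [b, Pi.basis_apply]
      have happ : ((Matrix.toLin' (diagonal D)).restrictScalars ℝ) (b ⟨j, t⟩) =
          Pi.single j (D j * Complex.basisOneI t) := by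
        rw [hbq]
        ext i'
        simp only [LinearMap.coe_restrictScalars, Matrix.toLin'_apply, Matrix.mulVec_diagonal]
        by_cases hij : i' = j
        · subst hij; simp
        · simp [Pi.single_apply, hij]
      rw [happ]
      have := Pi.basis_repr (fun _ : Fin k => Complex.basisOneI)
        (Pi.single j (D j * Complex.basisOneI t)) ⟨i, s⟩
      rw [this]
      by_cases hij : i = j
      · subst hij
        simp [Algebra.leftMulMatrix_eq_repr_mul]
      · simp [Pi.single_apply, hij]
    have hdet : (LinearMap.toMatrix b b ((Matrix.toLin' (diagonal D)).restrictScalars ℝ)).det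
        = ∏ i : Fin k, Complex.normSq (D i) := by
      let E : ((_ : Fin k) × Fin 2) ≃ (Fin 2 × Fin k) :=
        (Equiv.sigmaEquivProd (Fin k) (Fin 2)).trans (Equiv.prodComm _ _)
      rw [← Matrix.det_reindex_self E]
      have : Matrix.reindex E E (LinearMap.toMatrix b b
          ((Matrix.toLin' (diagonal D)).restrictScalars ℝ)) =
          Matrix.blockDiagonal (fun i => Algebra.leftMulMatrix Complex.basisOneI (D i)) := by
        ext ⟨s, i⟩ ⟨t, j⟩
        rw [Matrix.reindex_apply, Matrix.submatrix_apply]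
        have : E.symm (s, i) = ⟨i, s⟩ := rfl
        rw [this]
        have : E.symm (t, j) = ⟨j, t⟩ := rfl
        rw [this, hmat]
        rw [Matrix.blockDiagonal_apply]
      rw [this, Matrix.det_blockDiagonal]
      congr 1
      ext i
      rw [← Algebra.norm_eq_matrix_det Complex.basisOneI, Algebra.norm_complex_apply]
    rw [hdet, Matrix.det_diagonal, map_prod]
  | htransvec t =>
    rw [Matrix.TransvectionStruct.det, _root_.map_one]
    have hexp : t.toMatrix = 1 + Matrix.single t.i t.j t.c := rfl
    have hnil : (Matrix.single t.i t.j t.c) * (Matrix.single t.i t.j t.c) = 0 :=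
      Matrix.single_mul_single_of_ne (c := t.c) t.i t.j t.i t.hij.symm t.c
    rw [hexp]
    have : (Matrix.toLin' (1 + Matrix.single t.i t.j t.c)).restrictScalars ℝ =
        LinearMap.id + (Matrix.toLin' (Matrix.single t.i t.j t.c)).restrictScalars ℝ := by
      rw [map_add, Matrix.toLin'_one]
      rfl
    rw [this]
    apply aux_det_one_add_lin
    rw [← aux_restrict_comp, ← Matrix.toLin'_mul, hnil, map_zero]
    rfl
  | hmul A B hA hB =>
    rw [Matrix.toLin'_mul, aux_restrict_comp, LinearMap.det_comp, hA, hB, Matrix.det_mul, _root_.map_mul]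

end AuxDetLemmas

open MeasureTheory

lemma aux_jacDet_comp {k : ℕ} {f g : Ck k → Ck k} (hf : Differentiable ℂ f)
    (hg : Differentiable ℂ g) (z : Ck k) :
    jacDet (f ∘ g) z = jacDet f (g z) * jacDet g z := by
  unfold jacDet
  rw [fderiv_comp (x := z) (hf (g z)) (hg z)]
  exact LinearMap.det_comp _ _

lemma aux_gen_props {k m : ℕ} (φ : Fin m → Ck k → Ck k)
    (hvol : ∀ i, IsHoloAut (φ i) ∧ ∀ z, ‖jacDet (φ i) z‖ = 1)
    {ψ : Ck k → Ck k} (h : SemigroupGen (Set.range φ) ψ) :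
    Differentiable ℂ ψ ∧ Function.Injective ψ ∧ ∀ z, ‖jacDet ψ z‖ = 1 := by
  induction h with
  | base hf =>
    obtain ⟨i, rfl⟩ := hf
    obtain ⟨⟨hdiff, g, -, hleft, -⟩, hjac⟩ := hvol i
    exact ⟨hdiff, hleft.injective, hjac⟩
  | comp hf hg ihf ihg =>
    obtain ⟨hfd, hfi, hfj⟩ := ihf
    obtain ⟨hgd, hgi, hgj⟩ := ihg
    refine ⟨hfd.comp hgd, hfi.comp hgi, fun z => ?_⟩
    rw [aux_jacDet_comp hfd hgd, norm_mul, hfj, hgj, one_mul]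

/-- A holomorphic map with unimodular Jacobian preserves Lebesgue measure of measurable sets. -/
lemma aux_measure_image {k : ℕ} [NeZero k] {ψ : Ck k → Ck k} (hd : Differentiable ℂ ψ)
    (hi : Function.Injective ψ) (hj : ∀ z, ‖jacDet ψ z‖ = 1)
    {s : Set (Ck k)} (hs : MeasurableSet s) : volume (ψ '' s) = volume s := by
  have hder : ∀ x ∈ s, HasFDerivWithinAt ψ
      (((fderiv ℂ ψ x).restrictScalars ℝ)) s x :=
    fun x _ => (((hd x).hasFDerivAt).restrictScalars ℝ).hasFDerivWithinAt
  rw [← MeasureTheory.lintegral_abs_det_fderiv_eq_addHaar_image volume hs hder (hi.injOn)]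
  have hone : ∀ x, |((fderiv ℂ ψ x).restrictScalars ℝ : (Ck k) →L[ℝ] Ck k).det| = 1 := by
    intro x
    have h1 : (((fderiv ℂ ψ x).restrictScalars ℝ : (Ck k) →L[ℝ] Ck k)).det =
        Complex.normSq (jacDet ψ x) := by
      rw [ContinuousLinearMap.det]
      rw [ContinuousLinearMap.coe_restrictScalars]
      exact aux_det_restrict _
    rw [h1, ← Complex.sq_norm, hj, one_pow, abs_one]
  simp only [hone, ENNReal.ofReal_one]
  simp

/-- If `Ω` is an invariant Fatou component of a semigroup generated by finitely many
volume-preserving biholomorphisms of `ℂ^k`, then either `Ω` is recurrent or some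
sequence in `G` diverges uniformly to infinity on compact subsets of `Ω`. -/
theorem stmt_18 {k m : ℕ} (hk : 2 ≤ k) (φ : Fin m → Ck k → Ck k)
    (hvol : ∀ i, IsHoloAut (φ i) ∧ ∀ z, ‖jacDet (φ i) z‖ = 1)
    (Ω : Set (Ck k)) (hΩ : IsFatouComponent (GenSet (Set.range φ)) Ω)
    (hinv : ∀ ψ ∈ GenSet (Set.range φ), ψ '' Ω ⊆ Ω) :
    Recurrent (GenSet (Set.range φ)) Ω ∨
      ∃ g : ℕ → Ck k → Ck k, (∀ j, g j ∈ GenSet (Set.range φ)) ∧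
        DivergesUniformlyOn g Ω := by
  classical
  haveI : NeZero k := ⟨by omega⟩
  by_cases hrec : Recurrent (GenSet (Set.range φ)) Ω
  · exact Or.inl hrec
  right
  rw [Recurrent] at hrec
  push_neg at hrec
  obtain ⟨g, hgG, hbad⟩ := hrec
  -- basic facts about Ω
  obtain ⟨z₀, hz₀F, hΩeq⟩ := hΩ
  have hFopen : IsOpen (FatouSet (GenSet (Set.range φ))) := by
    rw [isOpen_iff_forall_mem_open]
    rintro z ⟨U, hUo, hzU, hUp⟩
    exact ⟨U, fun u hu => ⟨U, hUo, hu, hUp⟩, hUo, hzU⟩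
  have hΩopen : IsOpen Ω := by rw [hΩeq]; exact hFopen.connectedComponentIn
  have hΩF : Ω ⊆ FatouSet (GenSet (Set.range φ)) := by
    rw [hΩeq]; exact connectedComponentIn_subset _ _
  -- choose Fatou neighbourhoods and radii
  have key : ∀ z : Ck k, ∃ (U : Set (Ck k)) (r : ℝ), 0 < r ∧ (z ∈ Ω →
      (IsOpen U ∧ closedBall z r ⊆ U ∩ Ω ∧
       ∀ f : ℕ → Ck k → Ck k, (∀ n, f n ∈ GenSet (Set.range φ)) →
        ∃ s : ℕ → ℕ, StrictMono s ∧
          ((∃ h : Ck k → Ck k,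
              TendstoLocallyUniformlyOn (fun n => f (s n)) h atTop U) ∨
            DivergesUniformlyOn (fun n => f (s n)) U))) := by
    intro z
    by_cases hz : z ∈ Ω
    · obtain ⟨U, hUo, hzU, hUp⟩ := hΩF hz
      have hmem : U ∩ Ω ∈ 𝓝 z := (hUo.inter hΩopen).mem_nhds ⟨hzU, hz⟩
      obtain ⟨r, hrpos, hball⟩ := Metric.nhds_basis_closedBall.mem_iff.mp hmem
      exact ⟨U, r, hrpos, fun _ => ⟨hUo, hball, hUp⟩⟩
    · exact ⟨∅, 1, one_pos, fun h => absurd h hz⟩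
  choose U r hrpos hkey using key
  -- the central divergence extraction
  have div_z : ∀ t : ℕ → ℕ, StrictMono t → ∀ z ∈ Ω, ∃ s : ℕ → ℕ, StrictMono s ∧
      ∀ R > (0:ℝ), ∀ᶠ n in atTop, ∀ w ∈ closedBall z (r z), R < ‖g (t (s n)) w‖ := by
    intro t ht z hz
    obtain ⟨hUo, hball, hUp⟩ := hkey z hz
    obtain ⟨s, hs, hcase⟩ := hUp (fun n => g (t n)) (fun n => hgG (t n))
    refine ⟨s, hs, ?_⟩
    have hBU : closedBall z (r z) ⊆ U z := fun w hw => (hball hw).1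
    have hBΩ : closedBall z (r z) ⊆ Ω := fun w hw => (hball hw).2
    rcases hcase with ⟨h, hconv⟩ | hdiv
    · exfalso
      have htu : TendstoUniformlyOn (fun n => g (t (s n))) h atTop (closedBall z (r z)) :=
        (tendstoLocallyUniformlyOn_iff_forall_isCompact hUo).mp hconv _ hBU
          (isCompact_closedBall _ _)
      have hmem : ∀ (n : ℕ), ∀ w ∈ closedBall z (r z), g (t (s n)) w ∈ Ω :=
        fun n w hw => hinv _ (hgG _) ⟨w, hBΩ hw, rfl⟩
      have hnotin : ∀ w ∈ closedBall z (r z), h w ∉ Ω := by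
        intro w hw hmemΩ
        have hten := htu.tendsto_at hw
        exact hbad (t ∘ s) (ht.comp hs) w (hBΩ hw) (h w) hmemΩ
          (by simpa [Function.comp] using hten)
      have hcont : ContinuousOn h (closedBall z (r z)) :=
        htu.continuousOn (Frequently.of_forall fun n =>
          ((aux_gen_props φ hvol (hgG (t (s n)))).1.continuous).continuousOn)
      have hScomp : IsCompact (h '' closedBall z (r z)) :=
        (isCompact_closedBall _ _).image_of_continuousOn hcont
      set S := h '' closedBall z (r z) with hSdef
      set D : ℕ → Set (Ck k) := fun mm => Ω ∩ thickening (1/((mm:ℝ)+1)) S with hDdef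
      have hanti : Antitone D := by
        intro m1 m2 hm
        apply inter_subset_inter_right
        apply Metric.thickening_mono
        apply one_div_le_one_div_of_le (by positivity)
        exact_mod_cast by exact_mod_cast add_le_add_left (Nat.cast_le.mpr hm) 1
      have hlow : ∀ mm : ℕ, volume (ball z (r z)) ≤ volume (D mm) := by
        intro mm
        have hpos : (0:ℝ) < 1/((mm:ℝ)+1) := by positivity
        obtain ⟨n, hn⟩ := (Metric.tendstoUniformlyOn_iff.mp htu _ hpos).exists
        have himg : g (t (s n)) '' ball z (r z) ⊆ D mm := by
          rintro x ⟨w, hw, rfl⟩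
          have hw' : w ∈ closedBall z (r z) := ball_subset_closedBall hw
          refine ⟨hmem n w hw', ?_⟩
          rw [Metric.mem_thickening_iff]
          exact ⟨h w, mem_image_of_mem _ hw', by rw [dist_comm]; exact hn w hw'⟩
        obtain ⟨hd, hi, hj⟩ := aux_gen_props φ hvol (hgG (t (s n)))
        calc volume (ball z (r z)) = volume (g (t (s n)) '' ball z (r z)) :=
              (aux_measure_image hd hi hj measurableSet_ball).symm
          _ ≤ volume (D mm) := measure_mono himg
      have hiempty : ⋂ mm, D mm = ∅ := by
        ext x
        simp only [mem_iInter, mem_empty_iff_false, iff_false]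
        intro hx
        have hxS : x ∈ closure S := by
          rw [Metric.mem_closure_iff]
          intro ε hε
          obtain ⟨mm, hmm⟩ := exists_nat_one_div_lt hε
          obtain ⟨y, hy, hdist⟩ := Metric.mem_thickening_iff.mp (hx mm).2
          exact ⟨y, hy, hdist.trans hmm⟩
        rw [hScomp.isClosed.closure_eq] at hxS
        obtain ⟨w, hw, rfl⟩ := hxS
        exact hnotin w hw (hx 0).1
      have hfin : volume (D 0) ≠ ⊤ := by
        have hb : Bornology.IsBounded (D 0) := by
          have hsub : D 0 ⊆ thickening (1/((0:ℕ)+1:ℝ)) S := inter_subset_right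
          exact hScomp.isBounded.thickening.subset hsub
        exact hb.measure_lt_top.ne
      have htend := MeasureTheory.tendsto_measure_iInter_atTop
        (fun mm => ((hΩopen.inter isOpen_thickening).measurableSet).nullMeasurableSet)
        hanti ⟨0, hfin⟩
      rw [hiempty] at htend
      have hle : volume (ball z (r z)) ≤ 0 := by
        have := ge_of_tendsto htend (Eventually.of_forall hlow)
        simpa using this
      have hgt : 0 < volume (ball z (r z)) := measure_ball_pos _ _ (hrpos z)
      exact absurd (le_antisymm hle zero_le) hgt.ne'
    · intro R hR
      exact hdiv (closedBall z (r z)) hBU (isCompact_closedBall _ _) R hR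
  -- extract divergence over finitely many balls
  have multi : ∀ l : List (Ck k), (∀ z ∈ l, z ∈ Ω) → ∃ t : ℕ → ℕ, StrictMono t ∧
      ∀ z ∈ l, ∀ R > (0:ℝ), ∀ᶠ n in atTop, ∀ w ∈ closedBall z (r z), R < ‖g (t n) w‖ := by
    intro l
    induction l with
    | nil => exact fun _ => ⟨id, strictMono_id, by simp⟩
    | cons z l ih =>
      intro hl
      obtain ⟨t, ht, htl⟩ := ih fun w hw => hl w (List.mem_cons_of_mem _ hw)
      obtain ⟨s, hs, hz⟩ := div_z t ht z (hl z List.mem_cons_self)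
      refine ⟨t ∘ s, ht.comp hs, ?_⟩
      intro z' hz' R hR
      rcases List.mem_cons.mp hz' with rfl | hz'
      · exact hz R hR
      · exact (hs.tendsto_atTop).eventually (htl z' hz' R hR)
  -- single map far out on a compact set
  have L2 : ∀ K : Set (Ck k), K ⊆ Ω → IsCompact K → ∀ R > (0:ℝ),
      ∃ ψ ∈ GenSet (Set.range φ), ∀ w ∈ K, R < ‖ψ w‖ := by
    intro K hKΩ hKc R hR
    obtain ⟨T, hTK, hTcov⟩ := hKc.elim_nhds_subcover (fun z => ball z (r z))
      (fun z _ => ball_mem_nhds _ (hrpos z))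
    obtain ⟨t, ht, hdiv⟩ := multi T.toList fun z hz => hKΩ (hTK z (Finset.mem_toList.mp hz))
    have hall : ∀ᶠ n in atTop, ∀ z ∈ T, ∀ w ∈ closedBall z (r z), R < ‖g (t n) w‖ := by
      rw [Filter.eventually_all_finset]
      exact fun z hz => hdiv z (Finset.mem_toList.mpr hz) R hR
    obtain ⟨n, hn⟩ := hall.exists
    refine ⟨g (t n), hgG _, fun w hw => ?_⟩
    obtain ⟨z, hz, hwz⟩ := Set.mem_iUnion₂.mp (hTcov hw)
    exact hn z hz w (ball_subset_closedBall hwz)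
  -- exhaustion of Ω by compact sets
  set KK : ℕ → Set (Ck k) := fun n =>
    closedBall 0 n ∩ {w | ∀ u ∉ Ω, 1/((n:ℝ)+1) ≤ dist w u} with hKKdef
  have hKKc : ∀ n, IsCompact (KK n) := by
    intro n
    apply (isCompact_closedBall _ _).inter_right
    have : {w : Ck k | ∀ u ∉ Ω, 1/((n:ℝ)+1) ≤ dist w u} =
        ⋂ u ∈ Ωᶜ, {w | 1/((n:ℝ)+1) ≤ dist w u} := by
      ext w; simp [mem_iInter]
    rw [this]
    exact isClosed_biInter fun u _ =>
      isClosed_le continuous_const (continuous_id.dist continuous_const)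
  have hKKΩ : ∀ n, KK n ⊆ Ω := by
    intro n w hw
    by_contra hnot
    have := hw.2 w hnot
    rw [dist_self] at this
    have : (0:ℝ) < 1/((n:ℝ)+1) := by positivity
    linarith [hw.2 w hnot, dist_self w]
  have hKKmono : Monotone KK := by
    intro n1 n2 hn w hw
    refine ⟨?_, fun u hu => le_trans ?_ (hw.2 u hu)⟩
    · exact closedBall_subset_closedBall (by exact_mod_cast hn) hw.1
    · apply one_div_le_one_div_of_le (by positivity)
      have : (n1:ℝ) ≤ n2 := by exact_mod_cast hn
      linarith
  have habsorb : ∀ K : Set (Ck k), K ⊆ Ω → IsCompact K → ∃ n₀, ∀ n ≥ n₀, K ⊆ KK n := by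
    intro K hKΩ hKc
    rcases K.eq_empty_or_nonempty with rfl | hKne
    · exact ⟨0, fun n _ => empty_subset _⟩
    obtain ⟨C, hC⟩ := hKc.isBounded.subset_closedBall 0
    rcases eq_empty_or_nonempty Ωᶜ with hOc | hOc
    · obtain ⟨n₀, hn₀⟩ := exists_nat_ge C
      refine ⟨n₀, fun n hn w hw => ⟨closedBall_subset_closedBall ?_ (hC hw), fun u hu => ?_⟩⟩
      · have : (n₀:ℝ) ≤ n := by exact_mod_cast hn
        linarith
      · have hucc : u ∈ Ωᶜ := hu
        rw [hOc] at hucc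
        exact hucc.elim
    · obtain ⟨w₀, hw₀K, hw₀min⟩ := hKc.exists_isMinOn hKne
        (continuous_infDist_pt Ωᶜ).continuousOn
      have hdpos : 0 < infDist w₀ Ωᶜ :=
        (hΩopen.isClosed_compl.notMem_iff_infDist_pos hOc).mp
          (by simp only [mem_compl_iff, not_not]; exact hKΩ hw₀K)
      obtain ⟨n₀, hn₀⟩ := exists_nat_ge (max C (1 / infDist w₀ Ωᶜ))
      refine ⟨n₀, fun n hn w hw => ⟨closedBall_subset_closedBall ?_ (hC hw), fun u hu => ?_⟩⟩
      · have h1 : C ≤ (n₀:ℝ) := le_trans (le_max_left _ _) hn₀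
        have : (n₀:ℝ) ≤ n := by exact_mod_cast hn
        linarith
      · have h2 : 1 / infDist w₀ Ωᶜ ≤ (n:ℝ) := by
          have : (n₀:ℝ) ≤ n := by exact_mod_cast hn
          linarith [le_trans (le_max_right C (1 / infDist w₀ Ωᶜ)) hn₀]
        have h3 : 1/((n:ℝ)+1) ≤ infDist w₀ Ωᶜ := by
          rw [div_le_iff₀ (by positivity)]
          rw [div_le_iff₀ hdpos] at h2
          nlinarith [hdpos]
        calc 1/((n:ℝ)+1) ≤ infDist w₀ Ωᶜ := h3
          _ ≤ infDist w Ωᶜ := hw₀min hw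
          _ ≤ dist w u := Metric.infDist_le_dist_of_mem hu
  -- construct the diverging sequence
  have hchoice : ∀ n : ℕ, ∃ ψ, ψ ∈ GenSet (Set.range φ) ∧ ∀ w ∈ KK n, ((n:ℝ)+1) < ‖ψ w‖ := by
    intro n
    obtain ⟨ψ, hψG, hψ⟩ := L2 (KK n) (hKKΩ n) (hKKc n) ((n:ℝ)+1) (by positivity)
    exact ⟨ψ, hψG, hψ⟩
  choose ψ hψG hψ using hchoice
  refine ⟨ψ, hψG, ?_⟩
  intro K hKΩ hKc R hR
  obtain ⟨n₀, hn₀⟩ := habsorb K hKΩ hKc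
  have hev1 : ∀ᶠ n : ℕ in atTop, R < (n:ℝ)+1 := by
    filter_upwards [tendsto_natCast_atTop_atTop.eventually_gt_atTop R] with n hn
    linarith
  filter_upwards [eventually_ge_atTop n₀, hev1] with n hn hnR
  intro z hz
  exact lt_trans hnR (hψ n z (hn₀ n hn hz))
end
end

section
/- Let k ≥ 2 and let G = ⟨φ_1, …, φ_m⟩ be a semigroup generated by finitely many volume-preserving biholomorphisms of ℂ^k (holomorphic automorphisms of ℂ^k whose complex Jacobian determinant has modulus 1 at every point). Let Ω be a wandering Fatou component of G. Then there exists a sequence (φ_n) in G that diverges uniformly to infinity on compact subsets of Ω. -/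
open Set Filter Metric Topology

noncomputable section

open MeasureTheory

/-- Real-coordinates model of `ℂ^k`. -/
def realSplit (k : ℕ) : ((Fin k ⊕ Fin k) → ℝ) ≃ₗ[ℝ] Ck k where
  toFun v := fun j => ⟨v (Sum.inl j), v (Sum.inr j)⟩
  map_add' x y := by funext j; apply Complex.ext <;> simp
  map_smul' c x := by funext j; apply Complex.ext <;> simp
  invFun w := Sum.elim (fun j => (w j).re) (fun j => (w j).im)
  left_inv v := by funext i; cases i <;> simp
  right_inv w := by funext j; apply Complex.ext <;> simp

lemma det_realBlock {k : ℕ} (M : Matrix (Fin k) (Fin k) ℂ) :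
    (Matrix.fromBlocks (M.map Complex.re) (M.map (fun z => -z.im))
      (M.map Complex.im) (M.map Complex.re)).det = Complex.normSq M.det := by
  set X : Matrix (Fin k) (Fin k) ℂ := M.map (fun z => (z.re : ℂ)) with hX
  set Y : Matrix (Fin k) (Fin k) ℂ := M.map (fun z => (z.im : ℂ)) with hY
  have key : ((Matrix.fromBlocks (M.map Complex.re) (M.map (fun z => -z.im))
      (M.map Complex.im) (M.map Complex.re)).map (Complex.ofRealHom)) =
      Matrix.fromBlocks X (-Y) Y X := by
    refine Matrix.ext fun i j => ?_
    rcases i with b | b <;> rcases j with a | a <;>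
      simp [Matrix.map_apply, hX, hY, Matrix.fromBlocks]
  have hL : (Matrix.fromBlocks (1 : Matrix (Fin k) (Fin k) ℂ) (0 : Matrix (Fin k) (Fin k) ℂ)
      (-(Complex.I • 1)) 1).det = 1 := by
    rw [Matrix.det_fromBlocks_zero₁₂]; simp
  have hR : (Matrix.fromBlocks (1 : Matrix (Fin k) (Fin k) ℂ) (0 : Matrix (Fin k) (Fin k) ℂ)
      (Complex.I • 1) 1).det = 1 := by
    rw [Matrix.det_fromBlocks_zero₁₂]; simp
  have hmul : Matrix.fromBlocks (1 : Matrix (Fin k) (Fin k) ℂ) (0 : Matrix (Fin k) (Fin k) ℂ) (-(Complex.I • 1)) 1 *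
      (Matrix.fromBlocks X (-Y) Y X) *
      Matrix.fromBlocks (1 : Matrix (Fin k) (Fin k) ℂ) (0 : Matrix (Fin k) (Fin k) ℂ) (Complex.I • 1) 1
      = Matrix.fromBlocks (X - Complex.I • Y) (-Y) (0 : Matrix (Fin k) (Fin k) ℂ) (X + Complex.I • Y) := by
    simp only [Matrix.fromBlocks_multiply, Matrix.one_mul, Matrix.mul_one, Matrix.zero_mul,
      Matrix.mul_zero, add_zero, zero_add, Matrix.neg_mul, Matrix.mul_neg, Matrix.smul_mul,
      Matrix.mul_smul, smul_smul, Complex.I_mul_I, neg_smul, one_smul, neg_neg,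
      Matrix.fromBlocks_inj]
    refine ⟨?_, ?_, ?_, ?_⟩ <;> try rw [hX]
    all_goals try simp only [smul_add, smul_smul, Complex.I_mul_I]
    all_goals first | trivial | module
  have hXIY : X + Complex.I • Y = M := by
    ext i j
    simp only [Matrix.add_apply, Matrix.smul_apply, Matrix.map_apply, hX, hY, smul_eq_mul]
    rw [mul_comm]; exact Complex.re_add_im _
  have hXmIY : X - Complex.I • Y = M.map (starRingEnd ℂ) := by
    ext i j
    simp only [Matrix.sub_apply, Matrix.smul_apply, Matrix.map_apply, hX, hY, smul_eq_mul]
    apply Complex.ext <;> simp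
  have hdet2 : (Matrix.fromBlocks X (-Y) Y X).det
      = (starRingEnd ℂ) M.det * M.det := by
    have h := congrArg Matrix.det hmul
    rw [Matrix.det_mul, Matrix.det_mul, hL, hR, one_mul, mul_one,
      Matrix.det_fromBlocks_zero₂₁, hXIY, hXmIY] at h
    rw [h]
    congr 1
    have h2 := (RingHom.map_det (starRingEnd ℂ) M).symm
    rw [RingHom.mapMatrix_apply] at h2
    exact h2
  apply Complex.ofReal_injective
  have h0 : (Complex.ofRealHom (Matrix.fromBlocks (M.map Complex.re) (M.map (fun z => -z.im))
      (M.map Complex.im) (M.map Complex.re)).det) = (Matrix.fromBlocks X (-Y) Y X).det := by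
    rw [RingHom.map_det, RingHom.mapMatrix_apply, key]
  calc ((Matrix.fromBlocks (M.map Complex.re) (M.map (fun z => -z.im))
      (M.map Complex.im) (M.map Complex.re)).det : ℂ)
      = (starRingEnd ℂ) M.det * M.det := by rw [← hdet2, ← h0]; rfl
    _ = (Complex.normSq M.det : ℂ) := by rw [mul_comm, Complex.mul_conj]

lemma det_restrictScalars_eq {k : ℕ} (f : Ck k →ₗ[ℂ] Ck k) :
    LinearMap.det (f.restrictScalars ℝ) = Complex.normSq (LinearMap.det f) := by
  have hconj := LinearMap.det_conj (LinearMap.restrictScalars ℝ f) (realSplit k).symm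
  rw [LinearEquiv.symm_symm] at hconj
  set g : ((Fin k ⊕ Fin k) → ℝ) →ₗ[ℝ] ((Fin k ⊕ Fin k) → ℝ) :=
    ((realSplit k).symm : Ck k →ₗ[ℝ] _) ∘ₗ LinearMap.restrictScalars ℝ f ∘ₗ
      (((realSplit k) : ((Fin k ⊕ Fin k) → ℝ) →ₗ[ℝ] Ck k)) with hg
  rw [← hconj, ← LinearMap.det_toMatrix' g]
  set M : Matrix (Fin k) (Fin k) ℂ := LinearMap.toMatrix' f with hM
  have hMdet : M.det = LinearMap.det f := LinearMap.det_toMatrix' f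
  have hbase1 : ∀ a : Fin k, (realSplit k) (fun j' => if j' = Sum.inl a then (1:ℝ) else 0)
      = (fun j' => if j' = a then (1:ℂ) else 0) := by
    intro a; funext j'
    apply Complex.ext <;> simp [realSplit, apply_ite Complex.re, apply_ite Complex.im]
  have hbase2 : ∀ a : Fin k, (realSplit k) (fun j' => if j' = Sum.inr a then (1:ℝ) else 0)
      = Complex.I • (fun j' => if j' = a then (1:ℂ) else 0) := by
    intro a; funext j'
    apply Complex.ext <;>
      simp [realSplit, apply_ite Complex.re, apply_ite Complex.im, Pi.smul_apply, apply_ite (Complex.I * ·)] <;>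
      split <;> simp
  have hf1 : ∀ a : Fin k, f (fun j' => if j' = a then (1:ℂ) else 0) = fun i => M i a := by
    intro a; funext i
    have := (LinearMap.toMatrix'_apply f i a).symm
    rw [show (Pi.single a (1:ℂ) : Fin k → ℂ) = (fun j' => if j' = a then (1:ℂ) else 0) from funext fun j' => Pi.single_apply _ _ _] at this
    exact this
  have hmat : LinearMap.toMatrix' g
      = Matrix.fromBlocks (M.map Complex.re) (M.map (fun z => -z.im))
        (M.map Complex.im) (M.map Complex.re) := by
    ext i j
    rw [LinearMap.toMatrix'_apply]
    rcases j with a | a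
    · have : g (fun j' => if j' = Sum.inl a then (1:ℝ) else 0)
          = Sum.elim (fun i => (M i a).re) (fun i => (M i a).im) := by
        rw [hg]
        simp only [LinearMap.coe_comp, Function.comp_apply, LinearEquiv.coe_coe,
          LinearMap.coe_restrictScalars]
        rw [hbase1 a, hf1 a]
        rfl
      rw [show (Pi.single (Sum.inl a) (1:ℝ) : Fin k ⊕ Fin k → ℝ) = (fun j' => if j' = Sum.inl a then (1:ℝ) else 0) from funext fun j' => Pi.single_apply _ _ _, this]
      rcases i with b | b <;> simp [Matrix.fromBlocks, Matrix.map_apply]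
    · have : g (fun j' => if j' = Sum.inr a then (1:ℝ) else 0)
          = Sum.elim (fun i => -(M i a).im) (fun i => (M i a).re) := by
        rw [hg]
        simp only [LinearMap.coe_comp, Function.comp_apply, LinearEquiv.coe_coe,
          LinearMap.coe_restrictScalars]
        rw [hbase2 a, _root_.map_smul, hf1 a]
        funext x
        rcases x with b | b <;>
          simp [realSplit, Pi.smul_apply, smul_eq_mul, Complex.mul_re, Complex.mul_im]
      rw [show (Pi.single (Sum.inr a) (1:ℝ) : Fin k ⊕ Fin k → ℝ) = (fun j' => if j' = Sum.inr a then (1:ℝ) else 0) from funext fun j' => Pi.single_apply _ _ _, this]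
      rcases i with b | b <;> simp [Matrix.fromBlocks, Matrix.map_apply]
  rw [hmat, det_realBlock, hMdet]

lemma measurePreserving_of_holo {k : ℕ} (f : Ck k → Ck k) (hd : Differentiable ℂ f)
    (hinj : Function.Injective f) (hsurj : Function.Surjective f)
    (hjac : ∀ z, ‖jacDet f z‖ = 1) :
    MeasurePreserving f (volume : Measure (Ck k)) volume := by
  have himg : ∀ s : Set (Ck k), MeasurableSet s → volume (f '' s) = volume s := by
    intro s hs
    have h := MeasureTheory.lintegral_abs_det_fderiv_eq_addHaar_image (volume : Measure (Ck k)) hs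
      (f' := fun x => ContinuousLinearMap.restrictScalars ℝ (fderiv ℂ f x))
      (fun x _ => ((hd x).hasFDerivAt.restrictScalars ℝ).hasFDerivWithinAt) hinj.injOn
    rw [← h]
    have hone : ∀ x : Ck k, |(ContinuousLinearMap.restrictScalars ℝ (fderiv ℂ f x)).det| = 1 := by
      intro x
      have h2 : (ContinuousLinearMap.restrictScalars ℝ (fderiv ℂ f x)).det
          = Complex.normSq (jacDet f x) := det_restrictScalars_eq _
      rw [h2, abs_of_nonneg (Complex.normSq_nonneg _), ← Complex.sq_norm, hjac x]
      norm_num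
    simp only [hone, ENNReal.ofReal_one]
    simp
  refine ⟨hd.continuous.measurable, ?_⟩
  apply MeasureTheory.Measure.ext
  intro A hA
  rw [MeasureTheory.Measure.map_apply hd.continuous.measurable hA]
  have h1 := himg (f ⁻¹' A) (hA.preimage hd.continuous.measurable)
  rw [Set.image_preimage_eq A hsurj] at h1
  exact h1.symm

lemma fatou_isOpen {k : ℕ} (G : Set (Ck k → Ck k)) : IsOpen (FatouSet G) := by
  rw [isOpen_iff_mem_nhds]
  rintro z ⟨U, hUo, hzU, hprop⟩
  exact mem_of_superset (hUo.mem_nhds hzU) (fun w hw => ⟨U, hUo, hw, hprop⟩)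

/-- Key volume contradiction: no subsequence of the wandering sequence can converge
locally uniformly near a point of `Ω`. -/
lemma vol_contra {k : ℕ} {G : Set (Ck k → Ck k)}
    (hnice : ∀ ψ ∈ G, Continuous ψ ∧ (∃ g, Continuous g ∧ Function.LeftInverse g ψ ∧
      Function.RightInverse g ψ) ∧ MeasurePreserving ψ (volume : Measure (Ck k)) volume)
    {Ω : Set (Ck k)} (hΩopen : IsOpen Ω)
    {ψ : ℕ → Ck k → Ck k} (hψG : ∀ n, ψ n ∈ G)
    {C : ℕ → Set (Ck k)}
    (hCcomp : ∀ n, ∃ w ∈ FatouSet G, C n = connectedComponentIn (FatouSet G) w)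
    (hCinj : Function.Injective C) (himg : ∀ n, ψ n '' Ω ⊆ C n)
    {u : ℕ → ℕ} (hu : Function.Injective u)
    {z₀ : Ck k} (hz₀ : z₀ ∈ Ω) {U : Set (Ck k)} (hU : IsOpen U) (hz₀U : z₀ ∈ U)
    {g : Ck k → Ck k} (hconv : TendstoLocallyUniformlyOn (fun n => ψ (u n)) g atTop U) :
    False := by
  obtain ⟨r, hr, hball⟩ := Metric.nhds_basis_closedBall.mem_iff.1
    ((hU.inter hΩopen).mem_nhds ⟨hz₀U, hz₀⟩)
  have htu : TendstoUniformlyOn (fun n => ψ (u n)) g atTop (closedBall z₀ r) :=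
    (tendstoLocallyUniformlyOn_iff_forall_isCompact hU).1 hconv (closedBall z₀ r)
      (hball.trans inter_subset_left) (isCompact_closedBall z₀ r)
  obtain ⟨N, hN⟩ := eventually_atTop.1 (Metric.tendstoUniformlyOn_iff.1 htu 1 one_pos)
  obtain ⟨x₀, hx₀, hmax⟩ := (isCompact_closedBall z₀ r).exists_isMaxOn
    ⟨z₀, mem_closedBall_self hr.le⟩ ((hnice _ (hψG (u N))).1.norm.continuousOn)
  set M : ℝ := ‖ψ (u N) x₀‖ with hM
  have hbound : ∀ n, N ≤ n → ∀ w ∈ closedBall z₀ r, ‖ψ (u n) w‖ ≤ M + 2 := by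
    intro n hn w hw
    have h1 : dist (ψ (u n) w) (ψ (u N) w) < 2 := by
      calc dist (ψ (u n) w) (ψ (u N) w)
          ≤ dist (ψ (u n) w) (g w) + dist (g w) (ψ (u N) w) := dist_triangle _ _ _
        _ < 1 + 1 := by
            have ha := hN n hn w hw
            have hb := hN N le_rfl w hw
            rw [dist_comm] at ha
            exact add_lt_add ha hb
        _ = 2 := by norm_num
    calc ‖ψ (u n) w‖ = dist (ψ (u n) w) 0 := (dist_zero_right _).symm
      _ ≤ dist (ψ (u n) w) (ψ (u N) w) + dist (ψ (u N) w) 0 := dist_triangle _ _ _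
      _ ≤ 2 + M := by
          rw [dist_zero_right]
          exact add_le_add h1.le (hmax hw)
      _ = M + 2 := by ring
  set A : ℕ → Set (Ck k) := fun n => ψ (u (N + n)) '' ball z₀ r with hA
  have hAopen : ∀ n, IsOpen (A n) := by
    intro n
    obtain ⟨-, ⟨gi, hgic, hgil, hgir⟩, -⟩ := hnice _ (hψG (u (N + n)))
    have : A n = gi ⁻¹' (ball z₀ r) := by
      ext x
      constructor
      · rintro ⟨b, hb, rfl⟩; simpa [hgil b] using hb
      · intro hx; exact ⟨gi x, hx, hgir x⟩
    rw [this]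
    exact isOpen_ball.preimage hgic
  have hAvol : ∀ n, volume (A n) = volume (ball z₀ r) := by
    intro n
    obtain ⟨hc, ⟨gi, hgic, hgil, hgir⟩, hmp⟩ := hnice _ (hψG (u (N + n)))
    have h1 := hmp.measure_preimage (s := A n) ((hAopen n).measurableSet).nullMeasurableSet
    have h2 : ψ (u (N + n)) ⁻¹' (A n) = ball z₀ r :=
      Set.preimage_image_eq _ hgil.injective
    rw [h2] at h1
    exact h1.symm
  have hAsub : ∀ n, A n ⊆ closedBall 0 (M + 2) := by
    rintro n x ⟨w, hw, rfl⟩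
    rw [mem_closedBall_zero_iff]
    exact hbound (N + n) (Nat.le_add_right _ _) w (ball_subset_closedBall hw)
  have hCdisj : ∀ a b : ℕ, a ≠ b → Disjoint (C a) (C b) := by
    intro a b hab
    by_contra hnd
    obtain ⟨w, hwa, hwb⟩ := Set.not_disjoint_iff.1 hnd
    obtain ⟨wa, hwaF, hCa⟩ := hCcomp a
    obtain ⟨wb, hwbF, hCb⟩ := hCcomp b
    apply hab
    apply hCinj
    rw [hCa, hCb, connectedComponentIn_eq (hCa ▸ hwa : w ∈ connectedComponentIn (FatouSet G) wa),
      connectedComponentIn_eq (hCb ▸ hwb : w ∈ connectedComponentIn (FatouSet G) wb)]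
  have hApd : Pairwise (Function.onFun Disjoint A) := by
    intro a b hab
    have h1 : A a ⊆ C (u (N + a)) := by
      refine subset_trans ?_ (himg (u (N + a)))
      exact Set.image_mono ((ball_subset_closedBall).trans (hball.trans inter_subset_right))
    have h2 : A b ⊆ C (u (N + b)) := by
      refine subset_trans ?_ (himg (u (N + b)))
      exact Set.image_mono ((ball_subset_closedBall).trans (hball.trans inter_subset_right))
    refine (hCdisj (u (N + a)) (u (N + b)) (fun h => hab ?_)).mono h1 h2
    have := hu h
    omega
  have hsum : volume (⋃ n, A n) = ∑' n : ℕ, volume (A n) :=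
    measure_iUnion hApd (fun n => (hAopen n).measurableSet)
  have htop : volume (⋃ n, A n) = ⊤ := by
    rw [hsum]
    have hc : volume (ball z₀ r) ≠ 0 := (isOpen_ball.measure_pos volume (nonempty_ball.2 hr)).ne'
    simp only [hAvol]
    exact ENNReal.tsum_const_eq_top_of_ne_zero hc
  have hfin : volume (⋃ n, A n) < ⊤ :=
    lt_of_le_of_lt (measure_mono (iUnion_subset hAsub))
      (isCompact_closedBall _ _).measure_lt_top
  rw [htop] at hfin
  exact lt_irrefl _ hfin

lemma gen_nice {k m : ℕ} (φ : Fin m → Ck k → Ck k)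
    (hvol : ∀ i, IsHoloAut (φ i) ∧ ∀ z, ‖jacDet (φ i) z‖ = 1) :
    ∀ ψ ∈ GenSet (Set.range φ),
      Continuous ψ ∧ (∃ g, Continuous g ∧ Function.LeftInverse g ψ ∧
        Function.RightInverse g ψ) ∧ MeasurePreserving ψ (volume : Measure (Ck k)) volume := by
  intro ψ hψ
  induction hψ with
  | base hf =>
    rename_i f
    obtain ⟨i, rfl⟩ := hf
    obtain ⟨⟨hd, g, hgd, hgl, hgr⟩, hj⟩ := hvol i
    exact ⟨hd.continuous, ⟨g, hgd.continuous, hgl, hgr⟩,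
      measurePreserving_of_holo _ hd hgl.injective hgr.surjective hj⟩
  | comp hf hg ihf ihg =>
    obtain ⟨hfc, ⟨fi, hfic, hfil, hfir⟩, hfm⟩ := ihf
    obtain ⟨hgc, ⟨gi, hgic, hgil, hgir⟩, hgm⟩ := ihg
    refine ⟨hfc.comp hgc, ⟨gi ∘ fi, hgic.comp hfic, ?_, ?_⟩, hfm.comp hgm⟩
    · intro x; simp [Function.comp, hfil _, hgil _]
    · intro x; simp [Function.comp, hgir _, hfir _]

/-- If `Ω` is a wandering Fatou component of a semigroup generated by finitely many
volume-preserving biholomorphisms of `ℂ^k`, then some sequence in `G` diverges uniformly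
to infinity on compact subsets of `Ω`. -/
theorem stmt_19 {k m : ℕ} (hk : 2 ≤ k) (φ : Fin m → Ck k → Ck k)
    (hvol : ∀ i, IsHoloAut (φ i) ∧ ∀ z, ‖jacDet (φ i) z‖ = 1)
    (Ω : Set (Ck k)) (hΩ : IsFatouComponent (GenSet (Set.range φ)) Ω)
    (hwand : {C : Set (Ck k) | IsFatouComponent (GenSet (Set.range φ)) C ∧
        ∃ ψ ∈ GenSet (Set.range φ), ψ '' Ω ⊆ C}.Infinite) :
    ∃ g : ℕ → Ck k → Ck k, (∀ j, g j ∈ GenSet (Set.range φ)) ∧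
      DivergesUniformlyOn g Ω := by
  classical
  have hnice := gen_nice φ hvol
  have hF : IsOpen (FatouSet (GenSet (Set.range φ))) := fatou_isOpen _
  obtain ⟨zΩ, hzΩF, hΩeq⟩ := hΩ
  have hΩopen : IsOpen Ω := hΩeq ▸ hF.connectedComponentIn
  have hΩF : Ω ⊆ FatouSet (GenSet (Set.range φ)) := hΩeq ▸ connectedComponentIn_subset _ _
  set e := hwand.natEmbedding with he
  have hCinj : Function.Injective (fun n => ((e n : Set (Ck k)))) :=
    fun a b h => e.injective (Subtype.ext h)
  have hCcomp : ∀ n, ∃ w ∈ FatouSet (GenSet (Set.range φ)),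
      (e n : Set (Ck k)) = connectedComponentIn (FatouSet (GenSet (Set.range φ))) w :=
    fun n => ((e n).2).1
  choose ψseq hmem using fun n => ((e n).2).2
  choose hψG himg using hmem
  refine ⟨ψseq, hψG, ?_⟩
  intro K hKΩ hK R hR
  have hloc : ∀ z ∈ K, ∃ ρ > (0:ℝ), ∀ᶠ n in atTop, ∀ w ∈ closedBall z ρ, R < ‖ψseq n w‖ := by
    intro z hz
    have hzΩ : z ∈ Ω := hKΩ hz
    obtain ⟨U, hUo, hzU, hprop⟩ := hΩF hzΩ
    obtain ⟨ρ, hρ, hballU⟩ := Metric.nhds_basis_closedBall.mem_iff.1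
      ((hUo.inter hΩopen).mem_nhds ⟨hzU, hzΩ⟩)
    refine ⟨ρ, hρ, ?_⟩
    by_contra hbad
    rw [Filter.not_eventually] at hbad
    have hbad' : ∃ᶠ n in atTop, ∃ w ∈ closedBall z ρ, ‖ψseq n w‖ ≤ R := by
      refine hbad.mono ?_
      intro n hn
      push_neg at hn
      exact hn
    obtain ⟨s, hs, hsP⟩ := Filter.extraction_of_frequently_atTop hbad'
    obtain ⟨t, ht, hcase⟩ := hprop (fun n => ψseq (s n)) (fun n => hψG (s n))
    rcases hcase with ⟨g, hconv⟩ | hdiv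
    · exact vol_contra hnice hΩopen hψG hCcomp hCinj himg
        ((hs.comp ht).injective) hzΩ hUo hzU (u := s ∘ t) hconv
    · have hev := hdiv (closedBall z ρ) (hballU.trans inter_subset_left)
        (isCompact_closedBall _ _) R hR
      obtain ⟨n, hn⟩ := hev.exists
      obtain ⟨w, hw, hwle⟩ := hsP (t n)
      exact absurd (hn w hw) (not_lt.2 hwle)
  choose ρ hρpos hρev using hloc
  obtain ⟨t, ht⟩ := hK.elim_nhds_subcover' (fun z hz => ball z (ρ z hz))
    (fun z hz => ball_mem_nhds z (hρpos z hz))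
  have hfin : ∀ᶠ n in atTop, ∀ x ∈ t, ∀ w ∈ closedBall (x : Ck k) (ρ x x.2), R < ‖ψseq n w‖ := by
    rw [Filter.eventually_all_finset]
    intro x _
    exact hρev x x.2
  refine hfin.mono ?_
  intro n hn w hw
  have hmem := ht hw
  simp only [Set.mem_iUnion] at hmem
  obtain ⟨x, hx, hwx⟩ := hmem
  exact hn x hx w (ball_subset_closedBall hwx)
end
end
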